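/- arXiv:2309.00488 — 3 statements merged into one kernel-verified Lean document; each statement's English description precedes it below -/
import Mathlib

section
/- Let E be a Polish space, α > 0, and let X be an E-valued progressively measurable process on a filtered probability space whose initial value X_0 has law ν. Let ψ, g : E → ℝ be bounded measurable functions such that M_t := ψ(X_t) − ψ(X_0) − ∫_0^t g(X_s) ds is a martingale with respect to the filtration. Then E[∫_0^∞ e^{−α s} (α ψ(X_s) − g(X_s)) ds] = ∫_E ψ dν. In particular, if k : E → ℝ is bounded measurable and g = α ψ − k, then E[∫_0^∞ e^{−α s} k(X_s) ds] = ∫_E ψ dν. -/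
open MeasureTheory Set Filter
open scoped Topology

lemma stmt3_exp_integral {α : ℝ} (hα : 0 < α) (a : ℝ) :
    ∫ s in Ioi a, α * Real.exp (-(α * s)) = Real.exp (-(α * a)) := by
  have hderiv : ∀ x ∈ Ici a, HasDerivAt (fun s => -Real.exp (-(α * s)))
      (α * Real.exp (-(α * x))) x := by
    intro x _
    have h1 : HasDerivAt (fun s : ℝ => -(α * s)) (-α) x := by
      simpa [Pi.neg_def] using ((hasDerivAt_id x).const_mul α).neg
    have h2 : HasDerivAt (fun s => -Real.exp (-(α * s))) (-(Real.exp (-(α * x)) * -α)) x :=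
      h1.exp.neg
    convert h2 using 1
    ring
  have hint : IntegrableOn (fun s => α * Real.exp (-(α * s))) (Ioi a) := by
    have := (exp_neg_integrableOn_Ioi a hα).const_mul α
    simpa [neg_mul, IntegrableOn] using this
  have htend : Tendsto (fun s => -Real.exp (-(α * s))) atTop (𝓝 0) := by
    have hbot : Tendsto (fun s : ℝ => -(α * s)) atTop atBot := by
      have := (tendsto_id (α := ℝ)).const_mul_atTop hα
      exact (tendsto_neg_atBot_iff.mpr this)
    have h : Tendsto (fun s : ℝ => Real.exp (-(α * s))) atTop (𝓝 0) :=
      Real.tendsto_exp_atBot.comp hbot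
    simpa using h.neg
  simpa using integral_Ioi_of_hasDerivAt_of_tendsto' hderiv hint htend

/-- Let `E` be a Polish space, `α > 0`, and `X` an `E`-valued progressively
measurable process on a filtered probability space whose initial value `X 0` has law `ν`.
Let `ψ, g : E → ℝ` be bounded measurable such that
`M t = ψ (X t) - ψ (X 0) - ∫_0^t g (X s) ds` is a martingale.  Then
`E[∫_0^∞ e^{-α s} (α ψ (X s) - g (X s)) ds] = ∫ ψ dν`, and in particular, for bounded
measurable `k` with `g = α ψ - k`, `E[∫_0^∞ e^{-α s} k (X s) ds] = ∫ ψ dν`. -/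
theorem stmt3 {E Ω : Type*} [MeasurableSpace E] [TopologicalSpace E] [PolishSpace E]
    [BorelSpace E] [m0 : MeasurableSpace Ω] (P : Measure Ω) [IsProbabilityMeasure P]
    (ℱ : ℝ → MeasurableSpace Ω) (hle : ∀ t, ℱ t ≤ m0) (hmono : Monotone ℱ)
    (X : ℝ → Ω → E)
    (hXmeas : Measurable fun p : ℝ × Ω => X p.1 p.2)
    (hprog : ∀ t : ℝ, 0 ≤ t →
      Measurable[((inferInstance : MeasurableSpace (Icc (0:ℝ) t)).prod (ℱ t))]
        (fun p : Icc (0:ℝ) t × Ω => X p.1 p.2))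
    (ν : Measure E) (hν : P.map (X 0) = ν)
    (α : ℝ) (hα : 0 < α)
    (ψ g : E → ℝ) (hψ : Measurable ψ) (hψb : ∃ C, ∀ x, |ψ x| ≤ C)
    (hg : Measurable g) (hgb : ∃ C, ∀ x, |g x| ≤ C)
    (hmartint : ∀ t : ℝ, 0 ≤ t → Integrable
      (fun ω => ψ (X t ω) - ψ (X 0 ω) - ∫ r in Ioc (0:ℝ) t, g (X r ω)) P)
    (hmart : ∀ s t : ℝ, 0 ≤ s → s ≤ t →
      P[fun ω => ψ (X t ω) - ψ (X 0 ω) - ∫ r in Ioc (0:ℝ) t, g (X r ω) | ℱ s]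
        =ᵐ[P] fun ω => ψ (X s ω) - ψ (X 0 ω) - ∫ r in Ioc (0:ℝ) s, g (X r ω)) :
    (∫ ω, (∫ s in Ioi (0:ℝ), Real.exp (-(α * s)) * (α * ψ (X s ω) - g (X s ω))) ∂P)
        = ∫ x, ψ x ∂ν ∧
      ∀ k : E → ℝ, Measurable k → (∃ C, ∀ x, |k x| ≤ C) →
        (g = fun x => α * ψ x - k x) →
        (∫ ω, (∫ s in Ioi (0:ℝ), Real.exp (-(α * s)) * k (X s ω)) ∂P) = ∫ x, ψ x ∂ν := by
  obtain ⟨Cψ₀, hCψ₀⟩ := hψb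
  obtain ⟨Cg₀, hCg₀⟩ := hgb
  set Cψ := max Cψ₀ 0 with hCψdef
  set Cg := max Cg₀ 0 with hCgdef
  have hCψ : ∀ x, |ψ x| ≤ Cψ := fun x => (hCψ₀ x).trans (le_max_left _ _)
  have hCg : ∀ x, |g x| ≤ Cg := fun x => (hCg₀ x).trans (le_max_left _ _)
  have hCψ0 : 0 ≤ Cψ := le_max_right _ _
  have hCg0 : 0 ≤ Cg := le_max_right _ _
  have hXm : ∀ s : ℝ, Measurable (X s) := fun s => hXmeas.comp measurable_prodMk_left
  have hmψ : Measurable fun p : ℝ × Ω => ψ (X p.1 p.2) := hψ.comp hXmeas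
  have hmg : Measurable fun p : ℝ × Ω => g (X p.1 p.2) := hg.comp hXmeas
  -- integrability over P of ψ(X s), g(X s)
  have hiψ : ∀ s : ℝ, Integrable (fun ω => ψ (X s ω)) P := fun s =>
    (integrable_const Cψ).mono' ((hψ.comp (hXm s)).aestronglyMeasurable)
      (ae_of_all _ fun ω => by simpa [Real.norm_eq_abs] using hCψ (X s ω))
  have hig : ∀ s : ℝ, Integrable (fun ω => g (X s ω)) P := fun s =>
    (integrable_const Cg).mono' ((hg.comp (hXm s)).aestronglyMeasurable)
      (ae_of_all _ fun ω => by simpa [Real.norm_eq_abs] using hCg (X s ω))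
  -- measurability of u, v
  have humeas : Measurable fun s : ℝ => ∫ ω, ψ (X s ω) ∂P :=
    hmψ.stronglyMeasurable.integral_prod_right'.measurable
  have hvmeas : Measurable fun s : ℝ => ∫ ω, g (X s ω) ∂P :=
    hmg.stronglyMeasurable.integral_prod_right'.measurable
  -- bounds on u, v
  have hub : ∀ s : ℝ, |∫ ω, ψ (X s ω) ∂P| ≤ Cψ := by
    intro s
    rw [← Real.norm_eq_abs]
    calc ‖∫ ω, ψ (X s ω) ∂P‖ ≤ Cψ * (P univ).toReal :=
          norm_integral_le_of_norm_le_const (ae_of_all _ fun ω => by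
            simpa [Real.norm_eq_abs] using hCψ (X s ω))
      _ = Cψ := by simp
  have hvb : ∀ s : ℝ, |∫ ω, g (X s ω) ∂P| ≤ Cg := by
    intro s
    rw [← Real.norm_eq_abs]
    calc ‖∫ ω, g (X s ω) ∂P‖ ≤ Cg * (P univ).toReal :=
          norm_integral_le_of_norm_le_const (ae_of_all _ fun ω => by
            simpa [Real.norm_eq_abs] using hCg (X s ω))
      _ = Cg := by simp
  -- integrability of the time integral term
  have hi1 : ∀ t : ℝ, Integrable (fun ω => ψ (X t ω) - ψ (X 0 ω)) P := fun t =>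
    (hiψ t).sub (hiψ 0)
  have hiA : ∀ t : ℝ, 0 ≤ t → Integrable (fun ω => ∫ r in Ioc (0:ℝ) t, g (X r ω)) P := by
    intro t ht
    have h := (hi1 t).sub (hmartint t ht)
    refine h.congr (ae_of_all _ fun ω => ?_)
    simp
  -- expectation of the martingale is 0
  have hEM : ∀ t : ℝ, 0 ≤ t →
      ∫ ω, (ψ (X t ω) - ψ (X 0 ω) - ∫ r in Ioc (0:ℝ) t, g (X r ω)) ∂P = 0 := by
    intro t ht
    have h1 := hmart 0 t le_rfl ht
    have h2 : ∫ ω, (P[fun ω => ψ (X t ω) - ψ (X 0 ω) - ∫ r in Ioc (0:ℝ) t, g (X r ω) | ℱ 0]) ω ∂P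
        = ∫ ω, (ψ (X t ω) - ψ (X 0 ω) - ∫ r in Ioc (0:ℝ) t, g (X r ω)) ∂P :=
      integral_condExp (hle 0)
    rw [← h2, integral_congr_ae h1]
    simp
  -- Fubini for the time-integral term
  have hswap1 : ∀ t : ℝ, 0 ≤ t →
      ∫ ω, (∫ r in Ioc (0:ℝ) t, g (X r ω)) ∂P
        = ∫ r in Ioc (0:ℝ) t, ∫ ω, g (X r ω) ∂P := by
    intro t ht
    have hInt : Integrable (Function.uncurry fun (ω : Ω) (r : ℝ) => g (X r ω))
        (P.prod (volume.restrict (Ioc (0:ℝ) t))) := by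
      refine (integrable_const Cg).mono'
        ((hmg.comp measurable_swap).aestronglyMeasurable) (ae_of_all _ fun p => ?_)
      simpa [Function.uncurry, Real.norm_eq_abs] using hCg (X p.2 p.1)
    exact integral_integral_swap hInt
  -- key identity: u t = u 0 + ∫_{(0,t]} v
  have huv : ∀ t : ℝ, 0 ≤ t →
      (∫ ω, ψ (X t ω) ∂P)
        = (∫ ω, ψ (X 0 ω) ∂P) + ∫ r in Ioc (0:ℝ) t, ∫ ω, g (X r ω) ∂P := by
    intro t ht
    have h0 := hEM t ht
    have e1 : ∫ ω, (ψ (X t ω) - ψ (X 0 ω) - ∫ r in Ioc (0:ℝ) t, g (X r ω)) ∂P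
        = (∫ ω, (ψ (X t ω) - ψ (X 0 ω)) ∂P)
          - ∫ ω, (∫ r in Ioc (0:ℝ) t, g (X r ω)) ∂P :=
      integral_sub (hi1 t) (hiA t ht)
    have e2 : ∫ ω, (ψ (X t ω) - ψ (X 0 ω)) ∂P
        = (∫ ω, ψ (X t ω) ∂P) - ∫ ω, ψ (X 0 ω) ∂P := integral_sub (hiψ t) (hiψ 0)
    rw [e1, e2, hswap1 t ht] at h0
    linarith
  -- inner integral over ω for fixed s
  have hainner : ∀ s : ℝ, ∫ ω, Real.exp (-(α * s)) * (α * ψ (X s ω) - g (X s ω)) ∂P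
      = Real.exp (-(α * s)) * (α * (∫ ω, ψ (X s ω) ∂P) - ∫ ω, g (X s ω) ∂P) := by
    intro s
    have h1 : Integrable (fun ω => α * ψ (X s ω)) P := (hiψ s).const_mul α
    have e : ∫ ω, (α * ψ (X s ω) - g (X s ω)) ∂P
        = (∫ ω, α * ψ (X s ω) ∂P) - ∫ ω, g (X s ω) ∂P := integral_sub h1 (hig s)
    rw [integral_const_mul, e, integral_const_mul]
  -- Fubini for the main double integral
  have hDint : Integrable (fun p : Ω × ℝ => (1:ℝ) * (Real.exp (-(α * p.2)) * (α * Cψ + Cg)))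
      (P.prod (volume.restrict (Ioi (0:ℝ)))) := by
    have h1 : Integrable (fun s : ℝ => Real.exp (-(α * s)) * (α * Cψ + Cg))
        (volume.restrict (Ioi (0:ℝ))) := by
      have := (exp_neg_integrableOn_Ioi 0 hα).mul_const (α * Cψ + Cg)
      simpa [neg_mul] using this
    exact (integrable_const (1:ℝ)).mul_prod h1
  have hFint : Integrable
      (Function.uncurry fun (ω : Ω) (s : ℝ) =>
        Real.exp (-(α * s)) * (α * ψ (X s ω) - g (X s ω)))
      (P.prod (volume.restrict (Ioi (0:ℝ)))) := by
    refine hDint.mono' ?_ (ae_of_all _ fun p => ?_)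
    · refine Measurable.aestronglyMeasurable ?_
      exact (Real.measurable_exp.comp (measurable_snd.const_mul α).neg).mul
        (((hmψ.comp measurable_swap).const_mul α).sub (hmg.comp measurable_swap))
    · have h1 : |α * ψ (X p.2 p.1) - g (X p.2 p.1)| ≤ α * Cψ + Cg := by
        calc |α * ψ (X p.2 p.1) - g (X p.2 p.1)|
            ≤ |α * ψ (X p.2 p.1)| + |g (X p.2 p.1)| := abs_sub _ _
          _ ≤ α * Cψ + Cg := by
              rw [abs_mul, abs_of_pos hα]
              exact add_le_add (mul_le_mul_of_nonneg_left (hCψ _) hα.le) (hCg _)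
      have h2 : (0:ℝ) ≤ Real.exp (-(α * p.2)) := (Real.exp_pos _).le
      simp only [Function.uncurry, Real.norm_eq_abs, abs_mul, Real.abs_exp, one_mul]
      exact mul_le_mul_of_nonneg_left h1 h2
  have hswap2 : (∫ ω, (∫ s in Ioi (0:ℝ), Real.exp (-(α * s)) * (α * ψ (X s ω) - g (X s ω))) ∂P)
      = ∫ s in Ioi (0:ℝ), Real.exp (-(α * s)) *
          (α * (∫ ω, ψ (X s ω) ∂P) - ∫ ω, g (X s ω) ∂P) := by
    rw [integral_integral_swap hFint]
    exact integral_congr_ae (ae_of_all _ fun s => hainner s)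
  -- the kernel G
  set G : ℝ × ℝ → ℝ := fun p =>
    ({q : ℝ × ℝ | q.2 ≤ q.1}).indicator
      (fun q => α * Real.exp (-(α * q.1)) * (∫ ω, g (X q.2 ω) ∂P)) p with hGdef
  have hGmeas : Measurable G := by
    refine Measurable.indicator ?_ (measurableSet_le measurable_snd measurable_fst)
    exact ((measurable_const.mul
      (Real.measurable_exp.comp (measurable_fst.const_mul α).neg)).mul
      (hvmeas.comp measurable_snd))
  have hGrow : ∀ s : ℝ, (fun r => G (s, r))
      = (Iic s).indicator (fun r => α * Real.exp (-(α * s)) * ∫ ω, g (X r ω) ∂P) := by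
    intro s
    funext r
    by_cases h : r ≤ s <;> simp [hGdef, Set.indicator, h]
  have hGcol : ∀ r : ℝ, (fun s => G (s, r))
      = (Ici r).indicator (fun s => α * Real.exp (-(α * s)) * ∫ ω, g (X r ω) ∂P) := by
    intro r
    funext s
    by_cases h : r ≤ s <;> simp [hGdef, Set.indicator, h, mem_Ici]
  -- rows of G integrate to the running integral
  have hWrep : ∀ s : ℝ, (∫ r in Ioi (0:ℝ), G (s, r))
      = α * Real.exp (-(α * s)) * ∫ r in Ioc (0:ℝ) s, ∫ ω, g (X r ω) ∂P := by
    intro s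
    rw [hGrow s, integral_indicator measurableSet_Iic,
      Measure.restrict_restrict measurableSet_Iic, Set.Iic_inter_Ioi, integral_const_mul]
  -- columns of G integrate to the exponential kernel
  have hColrep : ∀ r : ℝ, 0 < r → (∫ s in Ioi (0:ℝ), G (s, r))
      = Real.exp (-(α * r)) * ∫ ω, g (X r ω) ∂P := by
    intro r hr
    have hsub : Ici r ∩ Ioi (0:ℝ) = Ici r :=
      inter_eq_left.mpr (fun x hx => lt_of_lt_of_le hr hx)
    rw [hGcol r, integral_indicator measurableSet_Ici,
      Measure.restrict_restrict measurableSet_Ici, hsub, integral_Ici_eq_integral_Ioi,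
      integral_mul_const, stmt3_exp_integral hα r]
  -- integrability of G on the product
  have hHint : Integrable (fun p : ℝ × ℝ =>
      (α * Cg * Real.exp (-(α / 2 * p.1))) * Real.exp (-(α / 2 * p.2)))
      ((volume.restrict (Ioi (0:ℝ))).prod (volume.restrict (Ioi (0:ℝ)))) := by
    have h1 : Integrable (fun x : ℝ => α * Cg * Real.exp (-(α / 2 * x)))
        (volume.restrict (Ioi (0:ℝ))) := by
      have := (exp_neg_integrableOn_Ioi 0 (half_pos hα)).const_mul (α * Cg)
      simpa [neg_mul] using this
    have h2 : Integrable (fun x : ℝ => Real.exp (-(α / 2 * x)))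
        (volume.restrict (Ioi (0:ℝ))) := by
      have := exp_neg_integrableOn_Ioi 0 (half_pos hα)
      simpa [neg_mul, IntegrableOn] using this
    exact h1.mul_prod h2
  have hGint : Integrable G
      ((volume.restrict (Ioi (0:ℝ))).prod (volume.restrict (Ioi (0:ℝ)))) := by
    refine hHint.mono' hGmeas.aestronglyMeasurable (ae_of_all _ fun p => ?_)
    rw [Real.norm_eq_abs]
    by_cases h : p.2 ≤ p.1
    · have hGp : G p = α * Real.exp (-(α * p.1)) * ∫ ω, g (X p.2 ω) ∂P := by
        simp [hGdef, Set.indicator, h]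
      have hexp : Real.exp (-(α * p.1))
          ≤ Real.exp (-(α / 2 * p.1)) * Real.exp (-(α / 2 * p.2)) := by
        rw [← Real.exp_add]
        apply Real.exp_le_exp.2
        have := mul_le_mul_of_nonneg_left h (half_pos hα).le
        linarith
      calc |G p| = α * Real.exp (-(α * p.1)) * |∫ ω, g (X p.2 ω) ∂P| := by
            rw [hGp, abs_mul, abs_mul, abs_of_pos hα, Real.abs_exp]
        _ ≤ α * Real.exp (-(α * p.1)) * Cg := by
            exact mul_le_mul_of_nonneg_left (hvb p.2) (by positivity)
        _ ≤ α * (Real.exp (-(α / 2 * p.1)) * Real.exp (-(α / 2 * p.2))) * Cg := by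
            gcongr
        _ = (α * Cg * Real.exp (-(α / 2 * p.1))) * Real.exp (-(α / 2 * p.2)) := by ring
    · have hGp : G p = 0 := by simp [hGdef, Set.indicator, h]
      rw [hGp, abs_zero]
      positivity
  have hGint' : Integrable (Function.uncurry fun s r => G (s, r))
      ((volume.restrict (Ioi (0:ℝ))).prod (volume.restrict (Ioi (0:ℝ)))) := by
    exact hGint
  have hswap3 : (∫ s in Ioi (0:ℝ), ∫ r in Ioi (0:ℝ), G (s, r))
      = ∫ r in Ioi (0:ℝ), ∫ s in Ioi (0:ℝ), G (s, r) :=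
    integral_integral_swap hGint'
  -- integrability of the three pieces on (0, ∞)
  have hJ1 : Integrable (fun s : ℝ => α * Real.exp (-(α * s)) * (∫ ω, ψ (X 0 ω) ∂P))
      (volume.restrict (Ioi (0:ℝ))) := by
    have := ((exp_neg_integrableOn_Ioi 0 hα).const_mul α).mul_const (∫ ω, ψ (X 0 ω) ∂P)
    simpa [neg_mul] using this
  have hJ2a : Integrable (fun s : ℝ => ∫ r in Ioi (0:ℝ), G (s, r))
      (volume.restrict (Ioi (0:ℝ))) := hGint.integral_prod_left
  have hJ2b : Integrable (fun s : ℝ => Real.exp (-(α * s)) * ∫ ω, g (X s ω) ∂P)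
      (volume.restrict (Ioi (0:ℝ))) := by
    have hb : Integrable (fun s : ℝ => Real.exp (-(α * s)) * Cg)
        (volume.restrict (Ioi (0:ℝ))) := by
      have := (exp_neg_integrableOn_Ioi 0 hα).mul_const Cg
      simpa [neg_mul] using this
    refine hb.mono' ?_ (ae_of_all _ fun s => ?_)
    · exact ((Real.measurable_exp.comp (measurable_id.const_mul α).neg).mul
        hvmeas).aestronglyMeasurable
    · rw [Real.norm_eq_abs, abs_mul, Real.abs_exp]
      exact mul_le_mul_of_nonneg_left (hvb s) (Real.exp_pos _).le
  -- pointwise decomposition of the integrand on (0, ∞)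
  have heq : EqOn
      (fun s : ℝ => Real.exp (-(α * s)) *
        (α * (∫ ω, ψ (X s ω) ∂P) - ∫ ω, g (X s ω) ∂P))
      (fun s : ℝ => α * Real.exp (-(α * s)) * (∫ ω, ψ (X 0 ω) ∂P)
        + ((∫ r in Ioi (0:ℝ), G (s, r)) - Real.exp (-(α * s)) * ∫ ω, g (X s ω) ∂P))
      (Ioi (0:ℝ)) := by
    intro s hs
    simp only
    rw [huv s (le_of_lt hs), hWrep s]
    ring
  have eC : (∫ s in Ioi (0:ℝ), Real.exp (-(α * s)) *
        (α * (∫ ω, ψ (X s ω) ∂P) - ∫ ω, g (X s ω) ∂P))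
      = ∫ s in Ioi (0:ℝ), (α * Real.exp (-(α * s)) * (∫ ω, ψ (X 0 ω) ∂P)
        + ((∫ r in Ioi (0:ℝ), G (s, r)) - Real.exp (-(α * s)) * ∫ ω, g (X s ω) ∂P)) :=
    setIntegral_congr_fun measurableSet_Ioi heq
  have eA : (∫ s in Ioi (0:ℝ), (α * Real.exp (-(α * s)) * (∫ ω, ψ (X 0 ω) ∂P)
        + ((∫ r in Ioi (0:ℝ), G (s, r)) - Real.exp (-(α * s)) * ∫ ω, g (X s ω) ∂P)))
      = (∫ s in Ioi (0:ℝ), α * Real.exp (-(α * s)) * (∫ ω, ψ (X 0 ω) ∂P))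
        + ∫ s in Ioi (0:ℝ), ((∫ r in Ioi (0:ℝ), G (s, r))
            - Real.exp (-(α * s)) * ∫ ω, g (X s ω) ∂P) :=
    integral_add hJ1 (hJ2a.sub hJ2b)
  have eS : (∫ s in Ioi (0:ℝ), ((∫ r in Ioi (0:ℝ), G (s, r))
        - Real.exp (-(α * s)) * ∫ ω, g (X s ω) ∂P))
      = (∫ s in Ioi (0:ℝ), ∫ r in Ioi (0:ℝ), G (s, r))
        - ∫ s in Ioi (0:ℝ), Real.exp (-(α * s)) * ∫ ω, g (X s ω) ∂P :=
    integral_sub hJ2a hJ2b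
  have h1 : (∫ s in Ioi (0:ℝ), α * Real.exp (-(α * s)) * (∫ ω, ψ (X 0 ω) ∂P))
      = ∫ ω, ψ (X 0 ω) ∂P := by
    rw [integral_mul_const, stmt3_exp_integral hα 0]
    simp
  have h2 : (∫ s in Ioi (0:ℝ), ∫ r in Ioi (0:ℝ), G (s, r))
      = ∫ s in Ioi (0:ℝ), Real.exp (-(α * s)) * ∫ ω, g (X s ω) ∂P := by
    rw [hswap3]
    exact setIntegral_congr_fun measurableSet_Ioi (fun r hr => hColrep r hr)
  have hmap : ∫ x, ψ x ∂ν = ∫ ω, ψ (X 0 ω) ∂P := by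
    rw [← hν, integral_map (hXm 0).aemeasurable hψ.aestronglyMeasurable]
  have key : (∫ ω, (∫ s in Ioi (0:ℝ),
      Real.exp (-(α * s)) * (α * ψ (X s ω) - g (X s ω))) ∂P) = ∫ x, ψ x ∂ν := by
    rw [hswap2, eC, eA, eS, h2, sub_self, add_zero, h1, hmap]
  refine ⟨key, fun k hk hkb hgk => ?_⟩
  subst hgk
  simpa only [sub_sub_cancel] using key
end

section
/- Let (Ω, F, P_0) be a probability space and H ⊆ L^1(P_0) a nonempty set of nonnegative random variables with E_0[Λ] = 1 for all Λ ∈ H, which is closed in the weak topology σ(L^1, L^∞) of L^1(P_0). Suppose there exists a function h : ℝ_+ → ℝ_+ with h(τ)/(τ log τ) → ∞ as τ → ∞ and sup_{Λ ∈ H} E_0[h(Λ)] < ∞. Then the functional F(Λ) := E_0[Λ log Λ] attains its minimum on H. -/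
open MeasureTheory Filter
open scoped ENNReal

/-- The weak topology `σ(L¹, L∞)` on `L¹(P₀)`: the coarsest topology making
`Λ ↦ ∫ Λ g dP₀` continuous for every bounded measurable `g`. -/
noncomputable def weakL1Top {Ω : Type*} {m : MeasurableSpace Ω} (P₀ : Measure Ω) :
    TopologicalSpace (Lp ℝ 1 P₀) :=
  ⨅ (g : Ω → ℝ) (_ : Measurable g) (_ : ∃ K, ∀ ω, |g ω| ≤ K),
    TopologicalSpace.induced (fun Λ : Lp ℝ 1 P₀ => ∫ ω, Λ ω * g ω ∂P₀) inferInstance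

/-- The relative-entropy functional `F(Λ) = E₀[Λ log Λ]`, valued in `(-∞, ∞]`, encoded in
`ℝ≥0∞` via the shift by the constant `e⁻¹` (using `x log x ≥ -e⁻¹` and that `P₀` is a
probability measure). -/
noncomputable def entF {Ω : Type*} {m : MeasurableSpace Ω} (P₀ : Measure Ω) (Λ : Ω → ℝ) :
    ℝ≥0∞ :=
  ∫⁻ ω, ENNReal.ofReal (Λ ω * Real.log (Λ ω) + Real.exp (-1)) ∂P₀

open Topology

section Aux

lemma fenchel {x : ℝ} (t : ℝ) (hx : 0 ≤ x) :
    x * t - Real.exp (t - 1) ≤ x * Real.log x := by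
  rcases eq_or_lt_of_le hx with h0 | h0
  · simp [← h0]
    positivity
  · have hlog : Real.exp (Real.log x) = x := Real.exp_log h0
    have h1 : t - 1 - Real.log x ≤ Real.exp (t - 1 - Real.log x) - 1 := by
      linarith [Real.add_one_le_exp (t - 1 - Real.log x)]
    have h2 : Real.exp (t - 1 - Real.log x) * x = Real.exp (t - 1) := by
      nth_rewrite 2 [← hlog]
      rw [← Real.exp_add]; ring_nf
      
    nlinarith [h0]

lemma psi_mono_left {x s t : ℝ} (hst : s ≤ t) (ht : Real.exp (t - 1) ≤ x) :
    x * s - Real.exp (s - 1) ≤ x * t - Real.exp (t - 1) := by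
  have h1 : (s - t) + 1 ≤ Real.exp (s - t) := Real.add_one_le_exp _
  have h2 : Real.exp (t - 1) * Real.exp (s - t) = Real.exp (s - 1) := by
    rw [← Real.exp_add]; ring_nf
  nlinarith [Real.exp_pos (t - 1)]

lemma psi_mono_right {x s t : ℝ} (hts : t ≤ s) (ht : x ≤ Real.exp (t - 1)) :
    x * s - Real.exp (s - 1) ≤ x * t - Real.exp (t - 1) := by
  have h1 : (s - t) + 1 ≤ Real.exp (s - t) := Real.add_one_le_exp _
  have h2 : Real.exp (t - 1) * Real.exp (s - t) = Real.exp (s - 1) := by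
    rw [← Real.exp_add]; ring_nf
  nlinarith [Real.exp_pos (t - 1)]

noncomputable def gclamp (n : ℕ) (x : ℝ) : ℝ :=
  if x = 0 then -(n : ℝ) else max (-(n : ℝ)) (min (n : ℝ) (1 + Real.log x))

lemma gclamp_abs_le (n : ℕ) (x : ℝ) : |gclamp n x| ≤ n := by
  unfold gclamp
  split_ifs with hx
  · simp
  · rw [abs_le]
    constructor
    · exact le_max_left _ _
    · exact max_le (by simp) (min_le_left _ _)

lemma gclamp_measurable (n : ℕ) : Measurable (gclamp n) := by
  unfold gclamp
  exact Measurable.ite (measurableSet_eq) measurable_const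
    ((measurable_const.max ((measurable_const.min ((Real.measurable_log.const_add 1).comp measurable_id)))))

lemma psi_gclamp_nonneg (n : ℕ) {x : ℝ} (hx : 0 ≤ x) :
    0 ≤ x * gclamp n x - Real.exp (gclamp n x - 1) + Real.exp (-1) := by
  unfold gclamp
  split_ifs with h0
  · subst h0
    have : Real.exp (-(n:ℝ) - 1) ≤ Real.exp (-1) := by
      apply Real.exp_le_exp.mpr; simp
    simp only [zero_mul, zero_sub]
    linarith
  · have hx' : 0 < x := lt_of_le_of_ne hx (Ne.symm h0)
    set t := max (-(n : ℝ)) (min (n : ℝ) (1 + Real.log x)) with ht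
    have hlx : Real.exp (Real.log x) = x := Real.exp_log hx'
    rcases le_or_gt 0 (1 + Real.log x) with hs | hs
    · have hmin : (0:ℝ) ≤ min (n:ℝ) (1 + Real.log x) := le_min (by positivity) hs
      have htt : t = min (n:ℝ) (1 + Real.log x) := max_eq_right (le_trans (by simp) hmin)
      have ht0 : (0:ℝ) ≤ t := htt ▸ hmin
      have hts : t ≤ 1 + Real.log x := htt ▸ min_le_right _ _
      have hexp : Real.exp (t - 1) ≤ x := by
        rw [← hlx]; exact Real.exp_le_exp.mpr (by linarith)
      have := psi_mono_left ht0 hexp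
      simp only [mul_zero] at this
      have he : Real.exp (0 - 1) = Real.exp (-1) := by norm_num
      linarith [he ▸ this]
    · have hmin : min (n:ℝ) (1 + Real.log x) = 1 + Real.log x :=
        min_eq_right (by linarith [Nat.cast_nonneg (α := ℝ) n])
      have hts : 1 + Real.log x ≤ t := hmin ▸ le_max_right _ _
      have ht0 : t ≤ 0 := max_le (by simp) (by rw [hmin]; linarith)
      have hexp : x ≤ Real.exp (t - 1) := by
        rw [← hlx]; exact Real.exp_le_exp.mpr (by linarith)
      have := psi_mono_right ht0 hexp
      simp only [mul_zero] at this
      have he : Real.exp (0 - 1) = Real.exp (-1) := by norm_num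
      linarith [he ▸ this]

lemma psi_gclamp_mono {x : ℝ} (hx : 0 ≤ x) :
    Monotone fun n : ℕ => x * gclamp n x - Real.exp (gclamp n x - 1) + Real.exp (-1) := by
  apply monotone_nat_of_le_succ
  intro n
  rcases eq_or_lt_of_le hx with h0 | h0
  · simp only [gclamp, ← h0, if_pos rfl, zero_mul, zero_sub]
    have : Real.exp (-((n:ℝ)+1) - 1) ≤ Real.exp (-(n:ℝ) - 1) :=
      Real.exp_le_exp.mpr (by push_cast; linarith)
    push_cast
    linarith
  · have hne : x ≠ 0 := ne_of_gt h0
    have hlx : Real.exp (Real.log x) = x := Real.exp_log h0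
    simp only [gclamp, if_neg hne]
    rcases le_or_gt 0 (1 + Real.log x) with hs | hs
    · have e1 : ∀ m : ℕ, max (-(m:ℝ)) (min (m:ℝ) (1 + Real.log x)) = min (m:ℝ) (1 + Real.log x) :=
        fun m => max_eq_right (le_trans (by simp) (le_min (by positivity) hs))
      rw [e1 n, e1 (n+1)]
      have hst : min (n:ℝ) (1 + Real.log x) ≤ min ((n+1:ℕ):ℝ) (1 + Real.log x) :=
        min_le_min (by exact_mod_cast Nat.le_succ n) le_rfl
      have hexp : Real.exp (min ((n+1:ℕ):ℝ) (1 + Real.log x) - 1) ≤ x :=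
        (Real.exp_le_exp.mpr (by linarith [min_le_right ((n+1:ℕ):ℝ) (1 + Real.log x)])).trans_eq hlx
      linarith [psi_mono_left hst hexp]
    · have e1 : ∀ m : ℕ, max (-(m:ℝ)) (min (m:ℝ) (1 + Real.log x)) = max (-(m:ℝ)) (1 + Real.log x) :=
        fun m => by rw [min_eq_right (by linarith [Nat.cast_nonneg (α := ℝ) m])]
      rw [e1 n, e1 (n+1)]
      have hts : max (-((n+1:ℕ):ℝ)) (1 + Real.log x) ≤ max (-(n:ℝ)) (1 + Real.log x) :=
        max_le_max (by push_cast; linarith) le_rfl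
      have hexp : x ≤ Real.exp (max (-((n+1:ℕ):ℝ)) (1 + Real.log x) - 1) :=
        hlx.symm.le.trans (Real.exp_le_exp.mpr (by linarith [le_max_right (-((n+1:ℕ):ℝ)) (1 + Real.log x)]))
      linarith [psi_mono_right hts hexp]

lemma psi_gclamp_tendsto {x : ℝ} (hx : 0 ≤ x) :
    Tendsto (fun n : ℕ => x * gclamp n x - Real.exp (gclamp n x - 1) + Real.exp (-1)) atTop
      (𝓝 (x * Real.log x + Real.exp (-1))) := by
  rcases eq_or_lt_of_le hx with h0 | h0
  · simp only [gclamp, ← h0, if_pos rfl, zero_mul, zero_sub, Real.log_zero, mul_zero, zero_add]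
    have h1 : Tendsto (fun n : ℕ => -(n:ℝ) - 1) atTop atBot := by
      apply Filter.Tendsto.atBot_add _ tendsto_const_nhds
      exact tendsto_neg_atBot_iff.mpr tendsto_natCast_atTop_atTop
    have h2 : Tendsto (fun n : ℕ => Real.exp (-(n:ℝ) - 1)) atTop (𝓝 0) :=
      Real.tendsto_exp_atBot.comp h1
    have := (h2.neg.add tendsto_const_nhds (b := Real.exp (-1)))
    simpa using this
  · have hne : x ≠ 0 := ne_of_gt h0
    have hlx : Real.exp (Real.log x) = x := Real.exp_log h0
    apply Tendsto.congr' _ (tendsto_const_nhds)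
    filter_upwards [eventually_ge_atTop ⌈|1 + Real.log x|⌉₊] with n hn
    have habs : |1 + Real.log x| ≤ (n:ℝ) := le_trans (Nat.le_ceil _) (by exact_mod_cast hn)
    rw [abs_le] at habs
    have : gclamp n x = 1 + Real.log x := by
      simp only [gclamp, if_neg hne]
      rw [min_eq_right habs.2, max_eq_right (by linarith [habs.1])]
    rw [this]
    have : Real.exp (1 + Real.log x - 1) = x := by rw [show 1 + Real.log x - 1 = Real.log x by ring, hlx]
    rw [this]; ring

lemma psi_gclamp_iSup {x : ℝ} (hx : 0 ≤ x) :
    ⨆ n : ℕ, ENNReal.ofReal (x * gclamp n x - Real.exp (gclamp n x - 1) + Real.exp (-1)) =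
      ENNReal.ofReal (x * Real.log x + Real.exp (-1)) := by
  have hmono : Monotone fun n : ℕ =>
      ENNReal.ofReal (x * gclamp n x - Real.exp (gclamp n x - 1) + Real.exp (-1)) :=
    fun a b hab => ENNReal.ofReal_le_ofReal (psi_gclamp_mono hx hab)
  have h1 := (ENNReal.continuous_ofReal.tendsto (x * Real.log x + Real.exp (-1))).comp (psi_gclamp_tendsto hx)
  exact tendsto_nhds_unique (tendsto_atTop_iSup hmono) h1

lemma unif_int {Ω : Type*} [m0 : MeasurableSpace Ω] (P₀ : Measure Ω) [IsProbabilityMeasure P₀]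
    (h : ℝ → ℝ) (hh0 : ∀ x : ℝ, 0 ≤ x → 0 ≤ h x)
    (hhlim : Tendsto (fun τ : ℝ => h τ / (τ * Real.log τ)) atTop atTop)
    (C : ℝ≥0∞) (hC : C ≠ ⊤) {ε : ℝ} (hε : 0 < ε) :
    ∃ δ : ℝ, 0 < δ ∧ ∀ (Λ : Lp ℝ 1 P₀), 0 ≤ᵐ[P₀] (Λ : Ω → ℝ) →
      (∫⁻ ω, ENNReal.ofReal (h (Λ ω)) ∂P₀) ≤ C →
      ∀ A : Set Ω, MeasurableSet A → P₀ A ≤ ENNReal.ofReal δ →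
        ∫ ω in A, Λ ω ∂P₀ ≤ ε := by
  set Ct := C.toReal with hCt
  have hCt0 : 0 ≤ Ct := ENNReal.toReal_nonneg
  set B : ℝ := 2 * (Ct + 1) / ε with hB
  have hB0 : 0 < B := by positivity
  obtain ⟨M₀, hM₀⟩ := (hhlim.eventually (eventually_ge_atTop B)).exists_forall_of_atTop
  set M : ℝ := max M₀ (Real.exp 1) with hM
  have hMpos : 0 < M := lt_of_lt_of_le (Real.exp_pos 1) (le_max_right _ _)
  have hkey : ∀ τ : ℝ, M ≤ τ → B * τ ≤ h τ := by
    intro τ hτ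
    have hτe : Real.exp 1 ≤ τ := le_trans (le_max_right _ _) hτ
    have hτ1 : 1 < τ := lt_of_lt_of_le (by nlinarith [Real.exp_one_gt_d9]) hτe
    have hlog1 : 1 ≤ Real.log τ := by
      rw [show (1:ℝ) = Real.log (Real.exp 1) by simp]
      exact Real.log_le_log (Real.exp_pos 1) hτe
    have hpos : 0 < τ * Real.log τ := by nlinarith
    have := hM₀ τ (le_trans (le_max_left _ _) hτ)
    have h1 : B * (τ * Real.log τ) ≤ h τ := by
      rw [le_div_iff₀ hpos] at this
      linarith
    nlinarith [mul_le_mul_of_nonneg_left hlog1 (mul_pos hB0 (by linarith : (0:ℝ) < τ)).le]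
  set δ : ℝ := ε / (2 * M) with hδ
  refine ⟨δ, by positivity, ?_⟩
  intro Λ hΛpos hΛbdd A hA hPA
  have hpoint : ∀ x : ℝ, 0 ≤ x →
      ENNReal.ofReal x ≤ ENNReal.ofReal M + (ENNReal.ofReal B)⁻¹ * ENNReal.ofReal (h x) := by
    intro x hx
    have hxle : x ≤ M + h x / B := by
      rcases le_or_gt M x with hMx | hMx
      · have := hkey x hMx
        have : x ≤ h x / B := by rw [le_div_iff₀ hB0]; linarith
        linarith [hh0 x hx, hMpos]
      · have : 0 ≤ h x / B := div_nonneg (hh0 x hx) hB0.le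
        linarith
    calc ENNReal.ofReal x ≤ ENNReal.ofReal (M + h x / B) := ENNReal.ofReal_le_ofReal hxle
      _ = ENNReal.ofReal M + ENNReal.ofReal (h x / B) :=
          ENNReal.ofReal_add hMpos.le (div_nonneg (hh0 x hx) hB0.le)
      _ = ENNReal.ofReal M + (ENNReal.ofReal B)⁻¹ * ENNReal.ofReal (h x) := by
          rw [ENNReal.ofReal_div_of_pos hB0, div_eq_mul_inv, mul_comm]
  have hstep : ∫⁻ ω in A, ENNReal.ofReal (Λ ω) ∂P₀ ≤ ENNReal.ofReal ε := by
    have hmono : ∫⁻ ω in A, ENNReal.ofReal (Λ ω) ∂P₀ ≤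
        ∫⁻ ω in A, (ENNReal.ofReal M + (ENNReal.ofReal B)⁻¹ * ENNReal.ofReal (h (Λ ω))) ∂P₀ := by
      refine lintegral_mono_ae ?_
      exact (ae_restrict_of_ae (hΛpos.mono fun ω hω => hpoint _ hω))
    have hadd : ∫⁻ ω in A, (ENNReal.ofReal M + (ENNReal.ofReal B)⁻¹ * ENNReal.ofReal (h (Λ ω))) ∂P₀
        = ENNReal.ofReal M * P₀ A +
          (ENNReal.ofReal B)⁻¹ * ∫⁻ ω in A, ENNReal.ofReal (h (Λ ω)) ∂P₀ := by
      rw [lintegral_add_left measurable_const, lintegral_const,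
        Measure.restrict_apply_univ, lintegral_const_mul' _ _ (by
          simp [ENNReal.inv_ne_top]
          exact hB0)]
    have hBinv : (ENNReal.ofReal B)⁻¹ * (∫⁻ ω in A, ENNReal.ofReal (h (Λ ω)) ∂P₀) ≤
        ENNReal.ofReal (ε / 2) := by
      have h1 : (∫⁻ ω in A, ENNReal.ofReal (h (Λ ω)) ∂P₀) ≤ C :=
        le_trans (setLIntegral_le_lintegral _ _) hΛbdd
      have h2 : C = ENNReal.ofReal Ct := (ENNReal.ofReal_toReal hC).symm
      calc (ENNReal.ofReal B)⁻¹ * (∫⁻ ω in A, ENNReal.ofReal (h (Λ ω)) ∂P₀)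
          ≤ (ENNReal.ofReal B)⁻¹ * ENNReal.ofReal Ct := by
            exact mul_le_mul_right (h2 ▸ h1) _
        _ = ENNReal.ofReal (B⁻¹ * Ct) := by
            rw [← ENNReal.ofReal_inv_of_pos hB0, ← ENNReal.ofReal_mul (by positivity)]
        _ ≤ ENNReal.ofReal (ε / 2) := by
            apply ENNReal.ofReal_le_ofReal
            rw [hB]
            rw [inv_div]
            rw [div_mul_eq_mul_div, div_le_div_iff₀ (by positivity) (by norm_num)]
            nlinarith
    have hMδ : ENNReal.ofReal M * P₀ A ≤ ENNReal.ofReal (ε / 2) := by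
      calc ENNReal.ofReal M * P₀ A ≤ ENNReal.ofReal M * ENNReal.ofReal δ :=
            mul_le_mul_right hPA _
        _ = ENNReal.ofReal (M * δ) := (ENNReal.ofReal_mul hMpos.le).symm
        _ ≤ ENNReal.ofReal (ε / 2) := by
            apply ENNReal.ofReal_le_ofReal
            rw [hδ]
            rw [mul_div_assoc']
            rw [div_le_div_iff₀ (by positivity) (by norm_num)]
            ring_nf
            nlinarith [hMpos]
    calc ∫⁻ ω in A, ENNReal.ofReal (Λ ω) ∂P₀
        ≤ ENNReal.ofReal M * P₀ A +
          (ENNReal.ofReal B)⁻¹ * ∫⁻ ω in A, ENNReal.ofReal (h (Λ ω)) ∂P₀ := hmono.trans hadd.le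
      _ ≤ ENNReal.ofReal (ε / 2) + ENNReal.ofReal (ε / 2) := add_le_add hMδ hBinv
      _ = ENNReal.ofReal ε := by rw [← ENNReal.ofReal_add (by positivity) (by positivity)]; norm_num
  have heq : ∫ ω in A, Λ ω ∂P₀ = (∫⁻ ω in A, ENNReal.ofReal (Λ ω) ∂P₀).toReal := by
    rw [integral_eq_lintegral_of_nonneg_ae (ae_restrict_of_ae hΛpos)
      ((Lp.aestronglyMeasurable Λ).restrict)]
  rw [heq]
  calc (∫⁻ ω in A, ENNReal.ofReal (Λ ω) ∂P₀).toReal ≤ (ENNReal.ofReal ε).toReal :=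
        ENNReal.toReal_mono ENNReal.ofReal_ne_top hstep
    _ = ε := ENNReal.toReal_ofReal hε.le

lemma exists_weak_limit {Ω : Type*} [m0 : MeasurableSpace Ω] (P₀ : Measure Ω)
    [IsProbabilityMeasure P₀] (Λseq : ℕ → Lp ℝ 1 P₀) (𝒰 : Ultrafilter ℕ)
    (hpos : ∀ n, 0 ≤ᵐ[P₀] ((Λseq n : Ω → ℝ)))
    (hmean : ∀ n, (∫ ω, Λseq n ω ∂P₀) = 1)
    (hUI : ∀ ε : ℝ, 0 < ε → ∃ δ : ℝ, 0 < δ ∧ ∀ n, ∀ A : Set Ω, MeasurableSet A →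
      P₀ A ≤ ENNReal.ofReal δ → ∫ ω in A, Λseq n ω ∂P₀ ≤ ε) :
    ∃ f₀ : Ω → ℝ, Measurable f₀ ∧ (∀ ω, 0 ≤ f₀ ω) ∧ Integrable f₀ P₀ ∧
      (∫ ω, f₀ ω ∂P₀) ≤ 1 ∧
      ∀ g : Ω → ℝ, Measurable g → (∃ K : ℝ, ∀ ω, |g ω| ≤ K) →
        Tendsto (fun n => ∫ ω, Λseq n ω * g ω ∂P₀) (𝒰 : Filter ℕ)
          (𝓝 (∫ ω, f₀ ω * g ω ∂P₀)) := by
  classical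
  have hint : ∀ n, Integrable (fun ω => Λseq n ω) P₀ := fun n => L1.integrable_coeFn _
  have hnn : ∀ (n) (A : Set Ω), 0 ≤ ∫ ω in A, Λseq n ω ∂P₀ := fun n A =>
    integral_nonneg_of_ae (ae_restrict_of_ae (hpos n))
  have hle1 : ∀ (n) (A : Set Ω), ∫ ω in A, Λseq n ω ∂P₀ ≤ 1 := fun n A =>
    le_of_le_of_eq (setIntegral_le_integral (hint n) (hpos n)) (hmean n)
  have hex : ∀ A : Set Ω, ∃ L, Tendsto (fun n => ∫ ω in A, Λseq n ω ∂P₀)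
      (𝒰 : Filter ℕ) (𝓝 L) := by
    intro A
    obtain ⟨L, _, hL⟩ := (isCompact_Icc (a := (0:ℝ)) (b := 1)).ultrafilter_le_nhds
      (𝒰.map fun n => ∫ ω in A, Λseq n ω ∂P₀)
      (by
        simp only [Ultrafilter.coe_map]
        exact le_principal_iff.mpr (mem_map.mpr (univ_mem' fun n => ⟨hnn n A, hle1 n A⟩)))
    exact ⟨L, hL⟩
  set r : Set Ω → ℝ :=
    fun A => limUnder (𝒰 : Filter ℕ) (fun n => ∫ ω in A, Λseq n ω ∂P₀) with hrdef
  have hT : ∀ A : Set Ω, Tendsto (fun n => ∫ ω in A, Λseq n ω ∂P₀)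
      (𝒰 : Filter ℕ) (𝓝 (r A)) := fun A => tendsto_nhds_limUnder (hex A)
  have hrnn : ∀ A, 0 ≤ r A := fun A =>
    ge_of_tendsto (hT A) (Eventually.of_forall fun n => hnn n A)
  have hrle1 : ∀ A, r A ≤ 1 := fun A =>
    le_of_tendsto (hT A) (Eventually.of_forall fun n => hle1 n A)
  have hradd : ∀ A B : Set Ω, MeasurableSet B → Disjoint A B → r (A ∪ B) = r A + r B := by
    intro A B hB hAB
    refine tendsto_nhds_unique (hT (A ∪ B)) (((hT A).add (hT B)).congr fun n => ?_)
    exact (setIntegral_union hAB hB (hint n).integrableOn (hint n).integrableOn).symm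
  have hrempty : r ∅ = 0 := by
    refine tendsto_nhds_unique (hT ∅) ?_
    simpa using (tendsto_const_nhds : Tendsto (fun _ : ℕ => (0:ℝ)) _ _)
  have hσadd : ∀ f : ℕ → Set Ω, (∀ i, MeasurableSet (f i)) → Pairwise (Function.onFun Disjoint f) →
      ENNReal.ofReal (r (⋃ i, f i)) = ∑' i, ENNReal.ofReal (r (f i)) := by
    intro f hfm hfd
    set T : ℕ → Set Ω := fun k => ⋃ i, f (i + k) with hTdef
    have hTm : ∀ k, MeasurableSet (T k) := fun k => MeasurableSet.iUnion fun i => hfm _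
    have hT0 : T 0 = ⋃ i, f i := by simp [hTdef]
    have hTsucc : ∀ k, T k = f k ∪ T (k + 1) := by
      intro k; ext ω
      simp only [hTdef, Set.mem_iUnion, Set.mem_union]
      constructor
      · rintro ⟨i, hi⟩
        rcases Nat.eq_zero_or_pos i with h0 | h0
        · left; subst h0; simpa using hi
        · right; exact ⟨i - 1, by rwa [show i - 1 + (k + 1) = i + k by omega]⟩
      · rintro (hk | ⟨i, hi⟩)
        · exact ⟨0, by simpa using hk⟩
        · exact ⟨i + 1, by rwa [show i + 1 + k = i + (k + 1) by omega]⟩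
    have hdisjT : ∀ k, Disjoint (f k) (T (k + 1)) := fun k =>
      Set.disjoint_iUnion_right.mpr fun i => hfd (show k ≠ i + (k + 1) by omega)
    have hkey : ∀ k, r (⋃ i, f i) = (∑ i ∈ Finset.range k, r (f i)) + r (T k) := by
      intro k; induction k with
      | zero => simp [hT0]
      | succ k ih =>
        rw [ih, hTsucc k, hradd (f k) (T (k + 1)) (hTm (k + 1)) (hdisjT k),
          Finset.sum_range_succ]
        ring
    have hTanti : Antitone T := by
      intro a b hab
      refine Set.iUnion_subset fun i => ?_
      exact Set.subset_iUnion_of_subset (i + (b - a))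
        (by rw [show i + (b - a) + a = i + b by omega])
    have hTinter : ⋂ k, T k = ∅ := by
      ext ω
      simp only [Set.mem_iInter, Set.mem_empty_iff_false, iff_false]
      intro hω
      obtain ⟨i, hi⟩ := Set.mem_iUnion.mp (hω 0)
      obtain ⟨j, hj⟩ := Set.mem_iUnion.mp (hω (i + 1))
      exact (hfd (show i + 0 ≠ j + (i + 1) by omega)).le_bot ⟨hi, hj⟩
    have hPT : Tendsto (fun k => P₀ (T k)) atTop (𝓝 0) := by
      have := tendsto_measure_iInter_atTop (μ := P₀)
        (fun k => (hTm k).nullMeasurableSet) hTanti ⟨0, measure_ne_top _ _⟩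
      rwa [hTinter, measure_empty] at this
    have hrT : Tendsto (fun k => r (T k)) atTop (𝓝 0) := by
      rw [Metric.tendsto_atTop]
      intro ε hε
      obtain ⟨δ, hδ0, hδ⟩ := hUI (ε / 2) (by positivity)
      obtain ⟨N, hN⟩ := eventually_atTop.mp
        (hPT.eventually_lt_const (ENNReal.ofReal_pos.mpr hδ0))
      refine ⟨N, fun k hk => ?_⟩
      have h1 : r (T k) ≤ ε / 2 := le_of_tendsto (hT (T k))
        (Eventually.of_forall fun n => hδ n (T k) (hTm k) (hN k hk).le)
      have h2 : 0 ≤ r (T k) := hrnn _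
      rw [Real.dist_eq, sub_zero, abs_of_nonneg h2]
      linarith
    have hpartial : Tendsto (fun k => ∑ i ∈ Finset.range k, r (f i)) atTop
        (𝓝 (r (⋃ i, f i))) := by
      have heq : (fun k => ∑ i ∈ Finset.range k, r (f i)) =
          fun k => r (⋃ i, f i) - r (T k) := funext fun k => by rw [hkey k]; ring
      rw [heq]
      simpa using tendsto_const_nhds.sub hrT
    have hsum : HasSum (fun i => r (f i)) (r (⋃ i, f i)) :=
      (hasSum_iff_tendsto_nat_of_nonneg (fun i => hrnn _) _).mpr hpartial
    rw [← hsum.tsum_eq, ENNReal.ofReal_tsum_of_nonneg (fun i => hrnn _) hsum.summable]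
  set ν : Measure Ω := Measure.ofMeasurable (fun A _ => ENNReal.ofReal (r A))
    (by simp [hrempty]) hσadd with hνdef
  have hνapp : ∀ A : Set Ω, MeasurableSet A → ν A = ENNReal.ofReal (r A) := fun A hA =>
    Measure.ofMeasurable_apply A hA
  have hνfin : IsFiniteMeasure ν :=
    ⟨by rw [hνapp _ MeasurableSet.univ]; exact ENNReal.ofReal_lt_top⟩
  have hνac : ν ≪ P₀ := by
    refine Measure.AbsolutelyContinuous.mk fun A hA h0 => ?_
    have : ∀ n, ∫ ω in A, Λseq n ω ∂P₀ = 0 := by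
      intro n
      rw [Measure.restrict_eq_zero.mpr h0, integral_zero_measure]
    have hr0 : r A = 0 := tendsto_nhds_unique (hT A)
      (by simpa [funext this] using (tendsto_const_nhds : Tendsto (fun _ : ℕ => (0:ℝ)) _ _))
    rw [hνapp A hA, hr0, ENNReal.ofReal_zero]
  set f₀ : Ω → ℝ := fun ω => (ν.rnDeriv P₀ ω).toReal with hf₀def
  have hf₀meas : Measurable f₀ := (Measure.measurable_rnDeriv ν P₀).ennreal_toReal
  have hf₀nn : ∀ ω, 0 ≤ f₀ ω := fun ω => ENNReal.toReal_nonneg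
  have hf₀int : Integrable f₀ P₀ := @Measure.integrable_toReal_rnDeriv _ _ ν P₀ hνfin
  have hset : ∀ A : Set Ω, MeasurableSet A → ∫ ω in A, f₀ ω ∂P₀ = r A := by
    intro A hA
    rw [Measure.setIntegral_toReal_rnDeriv hνac A, measureReal_def, hνapp A hA,
      ENNReal.toReal_ofReal (hrnn A)]
  have hf₀le1 : (∫ ω, f₀ ω ∂P₀) ≤ 1 := by
    rw [← setIntegral_univ, hset _ MeasurableSet.univ]
    exact hrle1 _
  have hintmul : ∀ F : Ω → ℝ, Integrable F P₀ → ∀ u : Ω → ℝ,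
      AEStronglyMeasurable u P₀ → (∃ K : ℝ, ∀ ω, |u ω| ≤ K) →
      Integrable (fun ω => F ω * u ω) P₀ := by
    intro F hF u hu ⟨K, hKu⟩
    have : (fun ω => F ω * u ω) = fun ω => u ω * F ω := funext fun ω => mul_comm _ _
    rw [this]
    exact hF.bdd_mul hu (c := K) (Eventually.of_forall fun ω => by rw [Real.norm_eq_abs]; exact hKu ω)
  have habs1 : ∀ n, ∫ ω, |Λseq n ω| ∂P₀ = 1 := by
    intro n
    rw [← hmean n]
    exact integral_congr_ae ((hpos n).mono fun ω hω => abs_of_nonneg hω)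
  have hsimple : ∀ s : SimpleFunc Ω ℝ,
      Tendsto (fun n => ∫ ω, Λseq n ω * s ω ∂P₀) (𝒰 : Filter ℕ)
        (𝓝 (∫ ω, f₀ ω * s ω ∂P₀)) := by
    intro s
    induction s using SimpleFunc.induction with
    | @const c A hA =>
      have key : ∀ F : Ω → ℝ, (∫ ω, F ω *
          (SimpleFunc.piecewise A hA (SimpleFunc.const Ω c) (SimpleFunc.const Ω 0)) ω ∂P₀)
          = (∫ ω in A, F ω ∂P₀) * c := by
        intro F
        have heq : (fun ω => F ω *
            (SimpleFunc.piecewise A hA (SimpleFunc.const Ω c) (SimpleFunc.const Ω 0)) ω)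
            = A.indicator (fun ω => F ω * c) := by
          funext ω
          by_cases hω : ω ∈ A <;>
            simp [SimpleFunc.coe_piecewise, Set.piecewise_eq_indicator, hω,
              Set.indicator_of_mem, Set.indicator_of_notMem]
        rw [heq, integral_indicator hA, integral_mul_const]
      simp only [key]
      rw [hset A hA]
      exact (hT A).mul_const c
    | @add s₁ s₂ hdisj hf hg =>
      have hi1 : ∀ F : Ω → ℝ, Integrable F P₀ → ∀ t : SimpleFunc Ω ℝ,
          Integrable (fun ω => F ω * t ω) P₀ := by
        intro F hF t
        refine hintmul F hF t (t.stronglyMeasurable.aestronglyMeasurable) ?_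
        obtain ⟨K, hKt⟩ := t.exists_forall_norm_le
        exact ⟨K, fun ω => by rw [← Real.norm_eq_abs]; exact hKt ω⟩
      have key : ∀ F : Ω → ℝ, Integrable F P₀ →
          (∫ ω, F ω * (s₁ + s₂) ω ∂P₀)
            = (∫ ω, F ω * s₁ ω ∂P₀) + ∫ ω, F ω * s₂ ω ∂P₀ := by
        intro F hF
        have heq : (fun ω => F ω * (s₁ + s₂) ω)
            = fun ω => F ω * s₁ ω + F ω * s₂ ω := by
          funext ω; simp [SimpleFunc.coe_add]; ring
        rw [heq, integral_add (hi1 F hF s₁) (hi1 F hF s₂)]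
      simp only [key _ (hint _), key f₀ hf₀int]
      exact hf.add hg
  refine ⟨f₀, hf₀meas, hf₀nn, hf₀int, hf₀le1, ?_⟩
  rintro g hg ⟨K, hK⟩
  refine Metric.tendsto_nhds.mpr fun ε hε => ?_
  set q : ℝ := ε / 3 with hq
  have hq0 : 0 < q := by positivity
  -- the simple approximation s of g with uniform error ≤ q
  have hsmeas : Measurable fun ω => q * (⌊g ω / q⌋ : ℝ) := by
    have h1 : Measurable fun ω => ⌊g ω / q⌋ := (hg.div_const q).floor
    exact ((measurable_from_top (f := fun k : ℤ => q * (k : ℝ))).comp h1 :)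
  have hsrange : (Set.range fun ω => q * (⌊g ω / q⌋ : ℝ)).Finite := by
    refine Set.Finite.subset (((Set.finite_Icc ⌊-(K / q)⌋ ⌊K / q⌋).image
      fun k : ℤ => q * (k : ℝ))) ?_
    rintro x ⟨ω, rfl⟩
    refine ⟨⌊g ω / q⌋, ?_, rfl⟩
    obtain ⟨hK1, hK2⟩ := abs_le.mp (hK ω)
    constructor
    · refine Int.floor_le_floor ?_
      rw [show -(K / q) = (-K) / q by ring]
      gcongr
    · refine Int.floor_le_floor ?_
      gcongr
  set s : SimpleFunc Ω ℝ := ⟨fun ω => q * (⌊g ω / q⌋ : ℝ),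
    fun x => hsmeas (measurableSet_singleton x), hsrange⟩ with hsdef
  have hserr : ∀ ω, |g ω - s ω| ≤ q := by
    intro ω
    have h1 : (⌊g ω / q⌋ : ℝ) ≤ g ω / q := Int.floor_le _
    have h2 : g ω / q < ⌊g ω / q⌋ + 1 := Int.lt_floor_add_one _
    have h3 : q * (⌊g ω / q⌋ : ℝ) ≤ g ω := by
      rw [mul_comm, ← le_div_iff₀ hq0]; exact h1
    have h4 : g ω ≤ q * (⌊g ω / q⌋ : ℝ) + q := by
      have := (div_lt_iff₀ hq0).mp h2
      nlinarith
    rw [abs_le]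
    constructor <;> simp only [hsdef, SimpleFunc.coe_mk] <;> linarith
  have hsbdd : ∃ K' : ℝ, ∀ ω, |s ω| ≤ K' := by
    refine ⟨K + q, fun ω => ?_⟩
    have := hserr ω
    have := hK ω
    rw [abs_le] at *
    constructor <;> linarith [this.1, this.2, (hserr ω)]
  have herr : ∀ F : Ω → ℝ, Integrable F P₀ →
      |(∫ ω, F ω * g ω ∂P₀) - ∫ ω, F ω * s ω ∂P₀| ≤ q * ∫ ω, |F ω| ∂P₀ := by
    intro F hF
    have hintg := hintmul F hF g hg.aestronglyMeasurable ⟨K, hK⟩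
    have hints := hintmul F hF s (s.stronglyMeasurable.aestronglyMeasurable) hsbdd
    rw [← integral_sub hintg hints]
    have e1 : (fun ω => F ω * g ω - F ω * s ω) = fun ω => F ω * (g ω - s ω) :=
      funext fun ω => by ring
    rw [e1]
    calc |∫ ω, F ω * (g ω - s ω) ∂P₀| ≤ ∫ ω, |F ω * (g ω - s ω)| ∂P₀ :=
          by
          simpa only [Real.norm_eq_abs] using
            norm_integral_le_integral_norm (fun ω => F ω * (g ω - s ω)) (μ := P₀)
      _ ≤ ∫ ω, |F ω| * q ∂P₀ := by
          refine integral_mono ((hintmul F hF _ (hg.aestronglyMeasurable.sub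
            (s.stronglyMeasurable.aestronglyMeasurable))
            ⟨q, hserr⟩)).abs (hF.abs.mul_const q) fun ω => ?_
          rw [abs_mul]
          exact mul_le_mul_of_nonneg_left (hserr ω) (abs_nonneg _)
      _ = q * ∫ ω, |F ω| ∂P₀ := by rw [integral_mul_const]; ring
  have habsf₀ : ∫ ω, |f₀ ω| ∂P₀ ≤ 1 := by
    refine le_trans (le_of_eq (integral_congr_ae
      (Eventually.of_forall fun ω => abs_of_nonneg (hf₀nn ω)))) hf₀le1
  filter_upwards [Metric.tendsto_nhds.mp (hsimple s) q hq0] with n hn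
  have e1 : |(∫ ω, Λseq n ω * g ω ∂P₀) - ∫ ω, Λseq n ω * s ω ∂P₀| ≤ q := by
    have := herr _ (hint n)
    rwa [habs1 n, mul_one] at this
  have e2 : |(∫ ω, f₀ ω * g ω ∂P₀) - ∫ ω, f₀ ω * s ω ∂P₀| ≤ q := by
    have := herr f₀ hf₀int
    nlinarith [abs_nonneg ((∫ ω, f₀ ω * g ω ∂P₀) - ∫ ω, f₀ ω * s ω ∂P₀), habsf₀, hq0.le,
      mul_le_mul_of_nonneg_left habsf₀ hq0.le]
  rw [Real.dist_eq] at hn ⊢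
  have t1 : |(∫ ω, Λseq n ω * g ω ∂P₀) - ∫ ω, f₀ ω * g ω ∂P₀| ≤
      |(∫ ω, Λseq n ω * g ω ∂P₀) - ∫ ω, f₀ ω * s ω ∂P₀|
      + |(∫ ω, f₀ ω * s ω ∂P₀) - ∫ ω, f₀ ω * g ω ∂P₀| := abs_sub_le _ _ _
  have t2 : |(∫ ω, Λseq n ω * g ω ∂P₀) - ∫ ω, f₀ ω * s ω ∂P₀| ≤
      |(∫ ω, Λseq n ω * g ω ∂P₀) - ∫ ω, Λseq n ω * s ω ∂P₀|
      + |(∫ ω, Λseq n ω * s ω ∂P₀) - ∫ ω, f₀ ω * s ω ∂P₀| := abs_sub_le _ _ _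
  have t3 : |(∫ ω, f₀ ω * s ω ∂P₀) - ∫ ω, f₀ ω * g ω ∂P₀|
      = |(∫ ω, f₀ ω * g ω ∂P₀) - ∫ ω, f₀ ω * s ω ∂P₀| := abs_sub_comm _ _
  rw [t3] at t1
  have hq3 : q + q + q = ε := by rw [hq]; ring
  linarith

lemma integrable_mul_bdd {Ω : Type*} [m0 : MeasurableSpace Ω] {P : Measure Ω} {F u : Ω → ℝ}
    (hF : Integrable F P) (hu : AEStronglyMeasurable u P) (hbd : ∃ K : ℝ, ∀ ω, |u ω| ≤ K) :
    Integrable (fun ω => F ω * u ω) P := by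
  obtain ⟨K, hK⟩ := hbd
  have : (fun ω => F ω * u ω) = fun ω => u ω * F ω := funext fun ω => mul_comm _ _
  rw [this]
  exact hF.bdd_mul hu (c := K) (Eventually.of_forall fun ω => by rw [Real.norm_eq_abs]; exact hK ω)

lemma ofReal_integral_le {Ω : Type*} [m0 : MeasurableSpace Ω] {P : Measure Ω} {f : Ω → ℝ}
    (hf : Integrable f P) :
    ENNReal.ofReal (∫ ω, f ω ∂P) ≤ ∫⁻ ω, ENNReal.ofReal (f ω) ∂P := by
  have h1 : (∫ ω, f ω ∂P) ≤ ∫ ω, max (f ω) 0 ∂P :=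
    integral_mono hf hf.pos_part fun ω => le_max_left _ _
  calc ENNReal.ofReal (∫ ω, f ω ∂P) ≤ ENNReal.ofReal (∫ ω, max (f ω) 0 ∂P) :=
        ENNReal.ofReal_le_ofReal h1
    _ = ∫⁻ ω, ENNReal.ofReal (max (f ω) 0) ∂P :=
        ofReal_integral_eq_lintegral_ofReal hf.pos_part
          (Eventually.of_forall fun ω => le_max_right _ _)
    _ = ∫⁻ ω, ENNReal.ofReal (f ω) ∂P := by
        refine lintegral_congr fun ω => ?_
        rcases le_total (f ω) 0 with h | h
        · rw [max_eq_right h, ENNReal.ofReal_zero, ENNReal.ofReal_of_nonpos h]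
        · rw [max_eq_left h]

end Aux

/-- Let `H ⊆ L¹(P₀)` be a nonempty set of nonnegative random variables
with `E₀[Λ] = 1` for all `Λ ∈ H`, closed in the weak topology `σ(L¹, L∞)`.  If there is
an `h : ℝ₊ → ℝ₊` with `h(τ)/(τ log τ) → ∞` and `sup_{Λ ∈ H} E₀[h(Λ)] < ∞`, then the
functional `F(Λ) = E₀[Λ log Λ]` attains its minimum on `H`. -/
theorem stmt7 {Ω : Type*} [m0 : MeasurableSpace Ω] (P₀ : Measure Ω) [IsProbabilityMeasure P₀]
    (H : Set (Lp ℝ 1 P₀)) (hne : H.Nonempty)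
    (hpos : ∀ Λ ∈ H, 0 ≤ᵐ[P₀] (Λ : Ω → ℝ))
    (hmean : ∀ Λ ∈ H, (∫ ω, Λ ω ∂P₀) = 1)
    (hclosed : @IsClosed _ (weakL1Top P₀) H)
    (h : ℝ → ℝ) (hh0 : ∀ x : ℝ, 0 ≤ x → 0 ≤ h x)
    (hhlim : Tendsto (fun τ : ℝ => h τ / (τ * Real.log τ)) atTop atTop)
    (C : ℝ≥0∞) (hC : C ≠ ⊤)
    (hbdd : ∀ Λ ∈ H, (∫⁻ ω, ENNReal.ofReal (h (Λ ω)) ∂P₀) ≤ C) :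
    ∃ Λ₀ ∈ H, ∀ Λ ∈ H, entF P₀ (Λ₀ : Ω → ℝ) ≤ entF P₀ (Λ : Ω → ℝ) := by
  classical
  set c : ℝ≥0∞ := ⨅ Λ : H, entF P₀ ((Λ : Lp ℝ 1 P₀) : Ω → ℝ) with hc
  have hcle : ∀ Λ ∈ H, c ≤ entF P₀ (Λ : Ω → ℝ) := fun Λ hΛ =>
    iInf_le (fun Λ' : H => entF P₀ ((Λ' : Lp ℝ 1 P₀) : Ω → ℝ)) (⟨Λ, hΛ⟩ : H)
  by_cases hctop : c = ⊤
  · obtain ⟨Λ₁, hΛ₁⟩ := hne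
    refine ⟨Λ₁, hΛ₁, fun Λ hΛ => ?_⟩
    have : entF P₀ (Λ : Ω → ℝ) = ⊤ := top_le_iff.mp (hctop ▸ hcle Λ hΛ)
    rw [this]; exact le_top
  · -- minimizing sequence
    have hseq : ∀ n : ℕ, ∃ Λ : Lp ℝ 1 P₀, Λ ∈ H ∧
        entF P₀ (Λ : Ω → ℝ) ≤ c + (↑(n + 1) : ℝ≥0∞)⁻¹ := by
      intro n
      have hlt : c < c + (↑(n + 1) : ℝ≥0∞)⁻¹ :=
        ENNReal.lt_add_right hctop (by simp)
      obtain ⟨⟨Λ, hΛ⟩, hlt'⟩ := iInf_lt_iff.mp (hc ▸ hlt)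
      exact ⟨Λ, hΛ, hlt'.le⟩
    choose Λseq hmemseq hentseq using hseq
    set 𝒰 : Ultrafilter ℕ := Ultrafilter.of atTop with h𝒰
    have h𝒰le : (𝒰 : Filter ℕ) ≤ atTop := Ultrafilter.of_le _
    have hUI : ∀ ε : ℝ, 0 < ε → ∃ δ : ℝ, 0 < δ ∧ ∀ (n) (A : Set Ω), MeasurableSet A →
        P₀ A ≤ ENNReal.ofReal δ → ∫ ω in A, Λseq n ω ∂P₀ ≤ ε := by
      intro ε hε
      obtain ⟨δ, hδ0, hδ⟩ := unif_int P₀ h hh0 hhlim C hC hε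
      exact ⟨δ, hδ0, fun n A hA hPA =>
        hδ (Λseq n) (hpos _ (hmemseq n)) (hbdd _ (hmemseq n)) A hA hPA⟩
    obtain ⟨f₀, hf₀meas, hf₀nn, hf₀int, hf₀le1, hconv⟩ :=
      exists_weak_limit P₀ Λseq 𝒰 (fun n => hpos _ (hmemseq n))
        (fun n => hmean _ (hmemseq n)) hUI
    set Λ₀ : Lp ℝ 1 P₀ := (memLp_one_iff_integrable.mpr hf₀int).toLp f₀ with hΛ₀def
    have hΛ₀coe : (Λ₀ : Ω → ℝ) =ᵐ[P₀] f₀ := MemLp.coeFn_toLp _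
    -- weak convergence
    have hwconv : Tendsto (fun n => Λseq n) (𝒰 : Filter ℕ) (@nhds _ (weakL1Top P₀) Λ₀) := by
      have hnhds : @nhds _ (weakL1Top P₀) Λ₀ =
          ⨅ (g : Ω → ℝ) (_ : Measurable g) (_ : ∃ K, ∀ ω, |g ω| ≤ K),
            comap (fun Λ : Lp ℝ 1 P₀ => ∫ ω, Λ ω * g ω ∂P₀) (𝓝 (∫ ω, Λ₀ ω * g ω ∂P₀)) := by
        rw [weakL1Top]
        simp_rw [_root_.nhds_iInf, nhds_induced]
      rw [hnhds]
      refine tendsto_iInf.mpr fun g => tendsto_iInf.mpr fun hg => tendsto_iInf.mpr fun hb => ?_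
      rw [tendsto_comap_iff]
      have heq : (∫ ω, Λ₀ ω * g ω ∂P₀) = ∫ ω, f₀ ω * g ω ∂P₀ :=
        integral_congr_ae (hΛ₀coe.mono fun ω hω => by dsimp only; rw [hω])
      rw [heq]
      exact hconv g hg hb
    -- membership by weak closedness
    have hΛ₀mem : Λ₀ ∈ H := by
      by_contra hnot
      have hop : @IsOpen _ (weakL1Top P₀) Hᶜ := hclosed.isOpen_compl
      have hmem' : Hᶜ ∈ @nhds _ (weakL1Top P₀) Λ₀ :=
        @IsOpen.mem_nhds _ (weakL1Top P₀) Λ₀ Hᶜ hop hnot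
      obtain ⟨n, hn⟩ := Filter.nonempty_of_mem (mem_map.mp (hwconv hmem'))
      exact hn (hmemseq n)
    -- lower semicontinuity bound
    have hmain : entF P₀ (Λ₀ : Ω → ℝ) ≤ c := by
      have hcoe : entF P₀ (Λ₀ : Ω → ℝ) = entF P₀ f₀ :=
        lintegral_congr_ae (hΛ₀coe.mono fun ω hω => by dsimp only; rw [hω])
      rw [hcoe]
      set G : ℕ → Ω → ℝ := fun n ω => gclamp n (f₀ ω) with hGdef
      have hGmeas : ∀ n, Measurable (G n) := fun n => (gclamp_measurable n).comp hf₀meas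
      have hGbd : ∀ (n) (ω), |G n ω| ≤ n := fun n ω => gclamp_abs_le n (f₀ ω)
      have hmct : entF P₀ f₀ = ⨆ n : ℕ, ∫⁻ ω,
          ENNReal.ofReal (f₀ ω * G n ω - Real.exp (G n ω - 1) + Real.exp (-1)) ∂P₀ := by
        rw [show entF P₀ f₀ =
            ∫⁻ ω, ENNReal.ofReal (f₀ ω * Real.log (f₀ ω) + Real.exp (-1)) ∂P₀ from rfl]
        rw [← lintegral_iSup'
          (f := fun n ω => ENNReal.ofReal (f₀ ω * G n ω - Real.exp (G n ω - 1) + Real.exp (-1)))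
          (fun n => Measurable.aemeasurable (by
            exact (((hf₀meas.mul (hGmeas n)).sub
              (Real.measurable_exp.comp ((hGmeas n).sub measurable_const))).add_const
              (Real.exp (-1))).ennreal_ofReal))
          (Eventually.of_forall fun ω => fun a b hab =>
            ENNReal.ofReal_le_ofReal (psi_gclamp_mono (hf₀nn ω) hab))]
        exact lintegral_congr fun ω => (psi_gclamp_iSup (hf₀nn ω)).symm
      rw [hmct]
      refine iSup_le fun n => ?_
      set D : ℝ := (∫ ω, Real.exp (G n ω - 1) ∂P₀) - Real.exp (-1) with hDdef
      have hexpmeas : Measurable fun ω => Real.exp (G n ω - 1) :=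
        Real.measurable_exp.comp ((hGmeas n).sub measurable_const)
      have hexpint : Integrable (fun ω => Real.exp (G n ω - 1)) P₀ := by
        refine Integrable.mono' (integrable_const (Real.exp ((n : ℝ) - 1)))
          hexpmeas.aestronglyMeasurable (Eventually.of_forall fun ω => ?_)
        rw [Real.norm_eq_abs, abs_of_pos (Real.exp_pos _)]
        exact Real.exp_le_exp.mpr (by linarith [(abs_le.mp (hGbd n ω)).2])
      -- real bound for each member of the sequence
      have hreal : ∀ m : ℕ, (∫ ω, Λseq m ω * G n ω ∂P₀) - D ≤
          (c + (↑(m + 1) : ℝ≥0∞)⁻¹).toReal := by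
        intro m
        have hint1 : Integrable (fun ω => Λseq m ω * G n ω) P₀ :=
          integrable_mul_bdd (L1.integrable_coeFn _) (hGmeas n).aestronglyMeasurable
            ⟨n, hGbd n⟩
        have hsub : Integrable (fun ω => Λseq m ω * G n ω - Real.exp (G n ω - 1)) P₀ :=
          hint1.sub hexpint
        have hintm : Integrable
            (fun ω => Λseq m ω * G n ω - Real.exp (G n ω - 1) + Real.exp (-1)) P₀ :=
          hsub.add (integrable_const _)
        have heval : (∫ ω, (Λseq m ω * G n ω - Real.exp (G n ω - 1) + Real.exp (-1)) ∂P₀)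
            = (∫ ω, Λseq m ω * G n ω ∂P₀) - D := by
          rw [integral_add hsub (integrable_const _),
            integral_sub hint1 hexpint, integral_const]
          simp [hDdef]
          ring
        have hfen : ∀ᵐ ω ∂P₀, ENNReal.ofReal
            (Λseq m ω * G n ω - Real.exp (G n ω - 1) + Real.exp (-1)) ≤
            ENNReal.ofReal (Λseq m ω * Real.log (Λseq m ω) + Real.exp (-1)) :=
          (hpos _ (hmemseq m)).mono fun ω hω =>
            ENNReal.ofReal_le_ofReal (by linarith [fenchel (G n ω) hω])
        have hle : ENNReal.ofReal ((∫ ω, Λseq m ω * G n ω ∂P₀) - D) ≤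
            c + (↑(m + 1) : ℝ≥0∞)⁻¹ := by
          calc ENNReal.ofReal ((∫ ω, Λseq m ω * G n ω ∂P₀) - D)
              = ENNReal.ofReal (∫ ω,
                  (Λseq m ω * G n ω - Real.exp (G n ω - 1) + Real.exp (-1)) ∂P₀) := by
                rw [heval]
            _ ≤ ∫⁻ ω, ENNReal.ofReal
                  (Λseq m ω * G n ω - Real.exp (G n ω - 1) + Real.exp (-1)) ∂P₀ :=
                ofReal_integral_le hintm
            _ ≤ ∫⁻ ω, ENNReal.ofReal
                  (Λseq m ω * Real.log (Λseq m ω) + Real.exp (-1)) ∂P₀ :=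
                lintegral_mono_ae hfen
            _ ≤ c + (↑(m + 1) : ℝ≥0∞)⁻¹ := hentseq m
        have hfin : c + (↑(m + 1) : ℝ≥0∞)⁻¹ ≠ ⊤ :=
          ENNReal.add_ne_top.mpr ⟨hctop, by simp⟩
        rcases le_or_gt ((∫ ω, Λseq m ω * G n ω ∂P₀) - D) 0 with h0 | h0
        · exact le_trans h0 ENNReal.toReal_nonneg
        · have := ENNReal.toReal_mono hfin hle
          rwa [ENNReal.toReal_ofReal h0.le] at this
      have htendlhs : Tendsto (fun m => (∫ ω, Λseq m ω * G n ω ∂P₀) - D)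
          (𝒰 : Filter ℕ) (𝓝 ((∫ ω, f₀ ω * G n ω ∂P₀) - D)) :=
        (hconv (G n) (hGmeas n) ⟨n, hGbd n⟩).sub tendsto_const_nhds
      have htendrhs : Tendsto (fun m : ℕ => (c + (↑(m + 1) : ℝ≥0∞)⁻¹).toReal)
          (𝒰 : Filter ℕ) (𝓝 c.toReal) := by
        refine Tendsto.mono_left ?_ h𝒰le
        have heq : ∀ m : ℕ, (c + (↑(m + 1) : ℝ≥0∞)⁻¹).toReal
            = c.toReal + 1 / ((m : ℝ) + 1) := by
          intro m
          rw [ENNReal.toReal_add hctop (by simp), ENNReal.toReal_inv, one_div]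
          congr 1
          rw [ENNReal.toReal_natCast]
          push_cast
          ring
        rw [funext heq]
        simpa using (tendsto_const_nhds (x := c.toReal)).add tendsto_one_div_add_atTop_nhds_zero_nat
      have hfinal : (∫ ω, f₀ ω * G n ω ∂P₀) - D ≤ c.toReal :=
        le_of_tendsto_of_tendsto' htendlhs htendrhs hreal
      have hint1' : Integrable (fun ω => f₀ ω * G n ω) P₀ :=
        integrable_mul_bdd hf₀int (hGmeas n).aestronglyMeasurable ⟨n, hGbd n⟩
      have hnn' : 0 ≤ᵐ[P₀] fun ω => f₀ ω * G n ω - Real.exp (G n ω - 1) + Real.exp (-1) :=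
        Eventually.of_forall fun ω => psi_gclamp_nonneg n (hf₀nn ω)
      have hsub' : Integrable (fun ω => f₀ ω * G n ω - Real.exp (G n ω - 1)) P₀ :=
        hint1'.sub hexpint
      have hintm' : Integrable
          (fun ω => f₀ ω * G n ω - Real.exp (G n ω - 1) + Real.exp (-1)) P₀ :=
        hsub'.add (integrable_const _)
      have heval' : (∫ ω, (f₀ ω * G n ω - Real.exp (G n ω - 1) + Real.exp (-1)) ∂P₀)
          = (∫ ω, f₀ ω * G n ω ∂P₀) - D := by
        rw [integral_add hsub' (integrable_const _),
          integral_sub hint1' hexpint, integral_const]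
        simp [hDdef]
        ring
      calc ∫⁻ ω, ENNReal.ofReal (f₀ ω * G n ω - Real.exp (G n ω - 1) + Real.exp (-1)) ∂P₀
          = ENNReal.ofReal ((∫ ω, f₀ ω * G n ω ∂P₀) - D) := by
            rw [← ofReal_integral_eq_lintegral_ofReal hintm' hnn', heval']
        _ ≤ ENNReal.ofReal c.toReal := ENNReal.ofReal_le_ofReal hfinal
        _ ≤ c := ENNReal.ofReal_toReal_le
    exact ⟨Λ₀, hΛ₀mem, fun Λ hΛ => le_trans hmain (hcle Λ hΛ)⟩
end

section
/- Let (Ω, F) carry an E-valued measurable process (X_r)_{r ∈ [0,T]}, E Polish, with F_{u,v} := σ(X_r : u ≤ r ≤ v) and F_{0,t} = F_{0,s} ∨ F_{s,t} for fixed 0 < s < t ≤ T. Let P_0, P be probability measures on F_{0,t} with P ≪ P_0 and Λ_t := dP/dP_0, and suppose that under P_0 the σ-algebras F_{0,s} and F_{s,t} are conditionally independent given σ(X_s). If Λ_t = E_0[Λ_t | F_{s,t}] P_0-almost surelyy (i.e. Λ_t has an F_{s,t}-measurable version), then s is a Markov point for X under P: F_{0,s} and F_{s,t} are conditionally independent given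 σ(X_s) under P. -/
open MeasureTheory Set

/-- `σ(X_r : u ≤ r ≤ v)`, the σ-algebra generated by the process on the time window `[u, v]`. -/
def sigmaUpTo {Ω E : Type*} [MeasurableSpace E] (X : ℝ → Ω → E) (u v : ℝ) :
    MeasurableSpace Ω :=
  ⨆ r ∈ Icc u v, MeasurableSpace.comap (X r) inferInstance

/-- Conditional independence of the σ-algebras `G` and `H` given `C` under `Q`:
`E_Q[g h | C] = E_Q[g | C] E_Q[h | C]` a.s. for all bounded `G`-measurable `g` and
bounded `H`-measurable `h`. -/
def CondIndepGiven {Ω : Type*} {m0 : MeasurableSpace Ω} (Q : Measure Ω)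
    (G H C : MeasurableSpace Ω) : Prop :=
  ∀ g h : Ω → ℝ, Measurable[G] g → Measurable[H] h →
    (∃ K, ∀ ω, |g ω| ≤ K) → (∃ K, ∀ ω, |h ω| ≤ K) →
    Q[fun ω => g ω * h ω|C] =ᵐ[Q] fun ω => (Q[g|C]) ω * (Q[h|C]) ω

/-- The real-valued Radon–Nikodym derivative `dP/dP₀`. -/
noncomputable def rnd {Ω : Type*} {m : MeasurableSpace Ω} (P P₀ : Measure Ω) (ω : Ω) : ℝ :=
  (P.rnDeriv P₀ ω).toReal

namespace Stmt15Aux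

variable {Ω : Type*} {m0 : MeasurableSpace Ω}

lemma int_of_bdd {μ : Measure Ω} [IsFiniteMeasure μ] {g : Ω → ℝ}
    (hg : AEStronglyMeasurable g μ) {K : ℝ} (hb : ∀ᵐ ω ∂μ, |g ω| ≤ K) : Integrable g μ :=
  (integrable_const K).mono' hg (hb.mono fun ω h => by simpa using h)

lemma condexp_bdd {μ : Measure Ω} {m : MeasurableSpace Ω} {g : Ω → ℝ} {K : ℝ}
    (hb : ∀ ω, |g ω| ≤ K) : ∀ᵐ ω ∂μ, |(μ[g|m]) ω| ≤ |K| := by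
  have h : ∀ᵐ ω ∂μ, |g ω| ≤ ((⟨|K|, abs_nonneg K⟩ : NNReal) : ℝ) :=
    ae_of_all _ fun ω => (hb ω).trans (le_abs_self K)
  exact ae_bdd_condExp_of_ae_bdd (m := m) h

lemma mul_indicator_integral {μ : Measure Ω} (f : Ω → ℝ) {A : Set Ω}
    (hA : MeasurableSet A) :
    ∫ ω, f ω * A.indicator (fun _ => 1) ω ∂μ = ∫ ω in A, f ω ∂μ := by
  rw [← integral_indicator hA]
  refine integral_congr_ae (ae_of_all _ fun ω => ?_)
  by_cases h : ω ∈ A <;> simp [Set.indicator_apply, h]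

lemma condexp_congr_of_condIndep {μ : Measure Ω} [IsProbabilityMeasure μ]
    {G H C : MeasurableSpace Ω} (hG : G ≤ m0) (hH : H ≤ m0) (hCH : C ≤ H)
    (ci : CondIndepGiven μ G H C) {g : Ω → ℝ} (hg : Measurable[G] g)
    {K : ℝ} (hb : ∀ ω, |g ω| ≤ K) :
    μ[g|C] =ᵐ[μ] μ[g|H] := by
  have hC : C ≤ m0 := hCH.trans hH
  have hgm : Measurable[m0] g := hg.mono hG le_rfl
  have hgi : Integrable g μ := int_of_bdd hgm.aestronglyMeasurable (μ := μ) (ae_of_all _ hb)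
  haveI hsf : SigmaFinite (μ.trim hH) := inferInstance
  refine ae_eq_condExp_of_forall_setIntegral_eq hH hgi
    (fun A hA hAfin => integrable_condExp.restrict)
    (fun A hA hAfin => ?_)
    (stronglyMeasurable_condExp.mono hCH).aestronglyMeasurable
  set i : Ω → ℝ := A.indicator fun _ => 1 with hi
  have hiH : Measurable[H] i := measurable_const.indicator hA
  have hib : ∀ ω, |i ω| ≤ 1 := fun ω => by
    by_cases h : ω ∈ A <;> simp [hi, Set.indicator_apply, h]
  have hii : Integrable i μ :=
    int_of_bdd (show Measurable[m0] i from hiH.mono hH le_rfl).aestronglyMeasurable (μ := μ) (ae_of_all _ hib)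
  have hgcb : ∀ᵐ ω ∂μ, |(μ[g|C]) ω| ≤ |K| := condexp_bdd hb
  have hgci : Integrable (fun ω => (μ[g|C]) ω * i ω) μ :=
    hii.bdd_mul (stronglyMeasurable_condExp.mono hC).aestronglyMeasurable
      (hgcb.mono fun ω h => by simpa using h)
  have h1 : μ[fun ω => g ω * i ω|C] =ᵐ[μ] fun ω => (μ[g|C]) ω * (μ[i|C]) ω :=
    ci g i hg hiH ⟨K, hb⟩ ⟨1, hib⟩
  have h2 : μ[(fun ω => (μ[g|C]) ω) * i|C] =ᵐ[μ] (fun ω => (μ[g|C]) ω) * μ[i|C] :=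
    condExp_mul_of_stronglyMeasurable_left stronglyMeasurable_condExp hgci hii
  have e1 : ∫ ω, g ω * i ω ∂μ = ∫ ω, (μ[g|C]) ω * i ω ∂μ := by
    calc ∫ ω, g ω * i ω ∂μ = ∫ ω, (μ[fun ω => g ω * i ω|C]) ω ∂μ :=
          (integral_condExp hC).symm
      _ = ∫ ω, (μ[g|C]) ω * (μ[i|C]) ω ∂μ := integral_congr_ae h1
      _ = ∫ ω, (μ[(fun ω => (μ[g|C]) ω) * i|C]) ω ∂μ := (integral_congr_ae h2).symm
      _ = ∫ ω, (μ[g|C]) ω * i ω ∂μ := integral_condExp hC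
  have hAm : MeasurableSet[m0] A := hH _ hA
  rw [← mul_indicator_integral g hAm, ← mul_indicator_integral (fun ω => (μ[g|C]) ω) hAm]
  exact e1.symm

lemma key_integral {Ω : Type*} {m0 : MeasurableSpace Ω}
    (P₀ P : Measure Ω) [IsProbabilityMeasure P₀] [IsProbabilityMeasure P]
    {G H C : MeasurableSpace Ω} (hG : G ≤ m0) (hH : H ≤ m0) (hCH : C ≤ H)
    (hac : P ≪ P₀) (ci : CondIndepGiven P₀ G H C)
    (hΛ : (fun ω => (P.rnDeriv P₀ ω).toReal) =ᵐ[P₀]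
      P₀[fun ω => (P.rnDeriv P₀ ω).toReal|H])
    {g k : Ω → ℝ} (hg : Measurable[G] g) (hk : Measurable[H] k)
    {Kg Kk : ℝ} (hgb : ∀ ω, |g ω| ≤ Kg) (hkb : ∀ ω, |k ω| ≤ Kk) :
    ∫ ω, g ω * k ω ∂P = ∫ ω, (P₀[g|C]) ω * k ω ∂P := by
  have hC : C ≤ m0 := hCH.trans hH
  set Λ : Ω → ℝ := fun ω => (P.rnDeriv P₀ ω).toReal with hΛdef
  set Λ' : Ω → ℝ := P₀[Λ|H] with hΛ'def
  have hΛm : Measurable[m0] Λ := (Measure.measurable_rnDeriv P P₀).ennreal_toReal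
  have hΛi : Integrable Λ P₀ := Measure.integrable_toReal_rnDeriv
  have hgm : Measurable[m0] g := hg.mono hG le_rfl
  have hkm : Measurable[m0] k := hk.mono hH le_rfl
  have hΛ'i : Integrable Λ' P₀ := integrable_condExp
  have hkΛ'i : Integrable (fun ω => k ω * Λ' ω) P₀ :=
    hΛ'i.bdd_mul (hkm.aestronglyMeasurable (μ := P₀))
      (ae_of_all _ fun ω => by
        simpa using (hkb ω).trans (le_abs_self Kk))
  have hkΛ'sm : StronglyMeasurable[H] (fun ω => k ω * Λ' ω) :=
    hk.stronglyMeasurable.mul stronglyMeasurable_condExp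
  have hmulint : Integrable ((fun ω => k ω * Λ' ω) * g) P₀ := by
    have := hkΛ'i.bdd_mul (hgm.aestronglyMeasurable (μ := P₀))
      (ae_of_all _ fun ω => by simpa using (hgb ω).trans (le_abs_self Kg))
    exact this.congr (ae_of_all _ fun ω => by simp [mul_comm])
  have hgiP₀ : Integrable g P₀ :=
    int_of_bdd (hgm.aestronglyMeasurable (μ := P₀)) (ae_of_all _ hgb)
  have pullout : P₀[(fun ω => k ω * Λ' ω) * g|H]
      =ᵐ[P₀] (fun ω => k ω * Λ' ω) * P₀[g|H] :=
    condExp_mul_of_stronglyMeasurable_left hkΛ'sm hmulint hgiP₀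
  have cd : P₀[g|C] =ᵐ[P₀] P₀[g|H] :=
    condexp_congr_of_condIndep hG hH hCH ci hg hgb
  have rn1 : ∫ ω, Λ ω * (g ω * k ω) ∂P₀ = ∫ ω, g ω * k ω ∂P := by
    simpa [smul_eq_mul] using integral_rnDeriv_smul hac (f := fun ω => g ω * k ω)
  have rn2 : ∫ ω, Λ ω * ((P₀[g|C]) ω * k ω) ∂P₀ = ∫ ω, (P₀[g|C]) ω * k ω ∂P := by
    simpa [smul_eq_mul] using
      integral_rnDeriv_smul hac (f := fun ω => (P₀[g|C]) ω * k ω)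
  calc ∫ ω, g ω * k ω ∂P = ∫ ω, Λ ω * (g ω * k ω) ∂P₀ := rn1.symm
    _ = ∫ ω, (fun ω => k ω * Λ' ω) ω * g ω ∂P₀ := by
        refine integral_congr_ae ?_
        filter_upwards [hΛ] with ω hω
        simp only [hΛdef] at hω ⊢
        rw [hω]; ring
    _ = ∫ ω, (P₀[(fun ω => k ω * Λ' ω) * g|H]) ω ∂P₀ := (integral_condExp hH).symm
    _ = ∫ ω, (k ω * Λ' ω) * (P₀[g|H]) ω ∂P₀ := integral_congr_ae pullout
    _ = ∫ ω, Λ ω * ((P₀[g|C]) ω * k ω) ∂P₀ := by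
        refine integral_congr_ae ?_
        filter_upwards [hΛ, cd] with ω h1 h2
        simp only [hΛdef] at h1 ⊢
        rw [h2, h1]; ring
    _ = ∫ ω, (P₀[g|C]) ω * k ω ∂P := rn2

lemma main_abstract {Ω : Type*} {m0 : MeasurableSpace Ω}
    (P₀ P : Measure Ω) [IsProbabilityMeasure P₀] [IsProbabilityMeasure P]
    {G H C : MeasurableSpace Ω} (hG : G ≤ m0) (hH : H ≤ m0) (hCH : C ≤ H)
    (hac : P ≪ P₀) (ci : CondIndepGiven P₀ G H C)
    (hΛ : (fun ω => (P.rnDeriv P₀ ω).toReal) =ᵐ[P₀]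
      P₀[fun ω => (P.rnDeriv P₀ ω).toReal|H]) :
    CondIndepGiven P G H C := by
  intro g h hg hh hgB hhB
  obtain ⟨Kg, hgb⟩ := hgB
  obtain ⟨Kh, hhb⟩ := hhB
  have hC : C ≤ m0 := hCH.trans hH
  have hgm : Measurable[m0] g := hg.mono hG le_rfl
  have hhm : Measurable[m0] h := hh.mono hH le_rfl
  have hgiP : Integrable g P :=
    int_of_bdd (hgm.aestronglyMeasurable (μ := P)) (ae_of_all _ hgb)
  have hhiP : Integrable h P :=
    int_of_bdd (hhm.aestronglyMeasurable (μ := P)) (ae_of_all _ hhb)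
  have hghiP : Integrable (fun ω => g ω * h ω) P :=
    hhiP.bdd_mul (hgm.aestronglyMeasurable (μ := P))
      (ae_of_all _ fun ω => by simpa using (hgb ω).trans (le_abs_self Kg))
  have hgCsm : StronglyMeasurable[C] (P₀[g|C]) := stronglyMeasurable_condExp
  have hgCbdP : ∀ᵐ ω ∂P, |(P₀[g|C]) ω| ≤ |Kg| :=
    (condexp_bdd hgb).filter_mono hac.ae_le
  have hgCasm : AEStronglyMeasurable[m0] (P₀[g|C]) P :=
    (hgCsm.mono hC).aestronglyMeasurable
  have hgCiP : Integrable (P₀[g|C]) P := int_of_bdd hgCasm hgCbdP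
  -- Claim A : P₀[g|C] is a version of P[g|C]
  have claimA : P₀[g|C] =ᵐ[P] P[g|C] := by
    refine ae_eq_condExp_of_forall_setIntegral_eq hC hgiP
      (fun A hA hAfin => hgCiP.restrict)
      (fun A hA hAfin => ?_)
      hgCsm.aestronglyMeasurable
    have hAm : MeasurableSet[m0] A := hC _ hA
    have hkH : Measurable[H] (A.indicator fun _ => (1 : ℝ)) :=
      measurable_const.indicator (hCH _ hA)
    have hkb : ∀ ω, |A.indicator (fun _ => (1 : ℝ)) ω| ≤ 1 := fun ω => by
      by_cases hω : ω ∈ A <;> simp [Set.indicator_apply, hω]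
    have kk := key_integral P₀ P hG hH hCH hac ci hΛ hg hkH hgb hkb
    rw [← mul_indicator_integral g hAm, ← mul_indicator_integral (fun ω => (P₀[g|C]) ω) hAm]
    exact kk.symm
  -- pull-out property under P
  have hprod : Integrable ((fun ω => (P₀[g|C]) ω) * h) P :=
    hhiP.bdd_mul hgCasm (hgCbdP.mono fun ω hω => by simpa using hω)
  have q : P[(fun ω => (P₀[g|C]) ω) * h|C]
      =ᵐ[P] (fun ω => (P₀[g|C]) ω) * P[h|C] :=
    condExp_mul_of_stronglyMeasurable_left hgCsm hprod hhiP
  have hhCbdP : ∀ᵐ ω ∂P, |(P[h|C]) ω| ≤ |Kh| := condexp_bdd hhb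
  have hφbd : ∀ᵐ ω ∂P, |(P₀[g|C]) ω * (P[h|C]) ω| ≤ |Kg| * |Kh| := by
    filter_upwards [hgCbdP, hhCbdP] with ω h1 h2
    rw [abs_mul]
    exact mul_le_mul h1 h2 (abs_nonneg _) ((abs_nonneg _).trans h1)
  have hφint : Integrable (fun ω => (P₀[g|C]) ω * (P[h|C]) ω) P :=
    int_of_bdd (hgCasm.mul ((stronglyMeasurable_condExp.mono hC).aestronglyMeasurable (μ := P))) hφbd
  -- Claim B
  have claimB : (fun ω => (P₀[g|C]) ω * (P[h|C]) ω) =ᵐ[P] P[fun ω => g ω * h ω|C] := by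
    refine ae_eq_condExp_of_forall_setIntegral_eq hC hghiP
      (fun A hA hAfin => hφint.restrict)
      (fun A hA hAfin => ?_)
      (hgCsm.mul stronglyMeasurable_condExp).aestronglyMeasurable
    have hAm : MeasurableSet[m0] A := hC _ hA
    have hAH : MeasurableSet[H] A := hCH _ hA
    have hkH : Measurable[H] (fun ω => h ω * A.indicator (fun _ => (1 : ℝ)) ω) :=
      hh.mul (measurable_const.indicator hAH)
    have hib : ∀ ω, |A.indicator (fun _ => (1 : ℝ)) ω| ≤ 1 := fun ω => by
      by_cases hω : ω ∈ A <;> simp [Set.indicator_apply, hω]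
    have hkb : ∀ ω, |h ω * A.indicator (fun _ => (1 : ℝ)) ω| ≤ |Kh| := fun ω => by
      rw [abs_mul]
      calc |h ω| * |A.indicator (fun _ => (1 : ℝ)) ω| ≤ |Kh| * 1 :=
            mul_le_mul ((hhb ω).trans (le_abs_self Kh)) (hib ω) (abs_nonneg _) (abs_nonneg _)
        _ = |Kh| := mul_one _
    have kk := key_integral P₀ P hG hH hCH hac ci hΛ hg hkH hgb hkb
    calc ∫ ω in A, (P₀[g|C]) ω * (P[h|C]) ω ∂P
        = ∫ ω in A, (P[(fun ω => (P₀[g|C]) ω) * h|C]) ω ∂P := by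
          refine (integral_congr_ae (ae_restrict_of_ae ?_)).symm
          filter_upwards [q] with ω hω
          simpa using hω
      _ = ∫ ω in A, (P₀[g|C]) ω * h ω ∂P := setIntegral_condExp hC hprod hA
      _ = ∫ ω, ((P₀[g|C]) ω * h ω) * A.indicator (fun _ => (1 : ℝ)) ω ∂P :=
          (mul_indicator_integral (fun ω => (P₀[g|C]) ω * h ω) hAm).symm
      _ = ∫ ω, (P₀[g|C]) ω * (h ω * A.indicator (fun _ => (1 : ℝ)) ω) ∂P := by
          refine integral_congr_ae (ae_of_all _ fun ω => ?_); ring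
      _ = ∫ ω, g ω * (h ω * A.indicator (fun _ => (1 : ℝ)) ω) ∂P := kk.symm
      _ = ∫ ω, (g ω * h ω) * A.indicator (fun _ => (1 : ℝ)) ω ∂P := by
          refine integral_congr_ae (ae_of_all _ fun ω => ?_); ring
      _ = ∫ ω in A, g ω * h ω ∂P := mul_indicator_integral (fun ω => g ω * h ω) hAm
  filter_upwards [claimB, claimA] with ω h1 h2
  simp only [← h1, h2]

end Stmt15Aux

/-- With `F_{u,v} = σ(X_r : u ≤ r ≤ v)`, `F_{0,t} = F_{0,s} ∨ F_{s,t}`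
(for fixed `0 < s < t ≤ T`), `P ≪ P₀`, `Λ_t = dP/dP₀`, and `F_{0,s}, F_{s,t}` conditionally
independent given `σ(X_s)` under `P₀`: if `Λ_t = E₀[Λ_t | F_{s,t}]` `P₀`-a.s., then `s` is a
Markov point for `X` under `P`, i.e. `F_{0,s}` and `F_{s,t}` are conditionally independent
given `σ(X_s)` under `P`. -/
theorem stmt15 {Ω E : Type*} [m0 : MeasurableSpace Ω]
    [MeasurableSpace E] [TopologicalSpace E] [PolishSpace E] [BorelSpace E]
    (X : ℝ → Ω → E) (T s t : ℝ) (hs : 0 < s) (hst : s < t) (htT : t ≤ T)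
    (hamb : sigmaUpTo X 0 t = m0)
    (hjoin : sigmaUpTo X 0 t = sigmaUpTo X 0 s ⊔ sigmaUpTo X s t)
    (P₀ P : Measure Ω) [IsProbabilityMeasure P₀] [IsProbabilityMeasure P]
    (hac : P ≪ P₀)
    (hMarkov₀ : CondIndepGiven P₀ (sigmaUpTo X 0 s) (sigmaUpTo X s t)
      (MeasurableSpace.comap (X s) inferInstance))
    (hΛ : rnd P P₀ =ᵐ[P₀] P₀[rnd P P₀|sigmaUpTo X s t]) :
    CondIndepGiven P (sigmaUpTo X 0 s) (sigmaUpTo X s t)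
      (MeasurableSpace.comap (X s) inferInstance) := by
  have hG : sigmaUpTo X 0 s ≤ m0 := by
    rw [← hamb]
    simp only [sigmaUpTo]
    exact iSup₂_le fun r hr =>
      le_biSup (fun r => MeasurableSpace.comap (X r) inferInstance)
        (show r ∈ Icc 0 t from ⟨hr.1, hr.2.trans hst.le⟩)
  have hH : sigmaUpTo X s t ≤ m0 := by
    rw [← hamb]
    simp only [sigmaUpTo]
    exact iSup₂_le fun r hr =>
      le_biSup (fun r => MeasurableSpace.comap (X r) inferInstance)
        (show r ∈ Icc 0 t from ⟨hs.le.trans hr.1, hr.2⟩)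
  have hCH : MeasurableSpace.comap (X s) inferInstance ≤ sigmaUpTo X s t := by
    simp only [sigmaUpTo]
    exact le_biSup (fun r => MeasurableSpace.comap (X r) inferInstance)
      (show s ∈ Icc s t from ⟨le_refl s, hst.le⟩)
  exact Stmt15Aux.main_abstract P₀ P hG hH hCH hac hMarkov₀ hΛ
end
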